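/- arXiv:2003.05017 — 10 statements merged into one kernel-verified Lean document; each statement's English description precedes it below -/
import Mathlib

section
/- For every positive rational number α there are only finitely many pairs (γ, M), where γ is a nonnegative integer and M is a finite multiset of integers m ≥ 2, satisfying α = 2γ − 2 + Σ_{m ∈ M} (1 − 1/m). -/
lemma split_sum (M : Multiset ℕ) : (M.map (fun m : ℕ => 1 - 1 / (m : ℚ))).sum
    = (M.card : ℚ) - (M.map (fun m : ℕ => 1 / (m : ℚ))).sum := by
  induction M using Multiset.induction_on with
  | empty => simp
  | cons a s ih =>
    simp only [Multiset.map_cons, Multiset.sum_cons, Multiset.card_cons]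
    push_cast
    rw [ih]
    ring

lemma egy (n : ℕ) : ∀ c : ℚ, {M : Multiset ℕ | (∀ m ∈ M, 2 ≤ m) ∧ M.card = n ∧
    (M.map (fun m : ℕ => 1 / (m : ℚ))).sum = c}.Finite := by
  induction n with
  | zero =>
    intro c
    apply Set.Finite.subset (Set.finite_singleton (0 : Multiset ℕ))
    rintro M ⟨-, hc, -⟩
    simp [Multiset.card_eq_zero.mp hc]
  | succ n ih =>
    intro c
    by_cases hc : 0 < c
    · set B : ℕ := ⌈((n : ℚ) + 1) / c⌉₊ with hB
      apply Set.Finite.subset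
        (Set.Finite.biUnion (Finset.Icc 2 B).finite_toSet
          (fun m _ => ((ih (c - 1 / (m : ℚ))).image (fun M' => m ::ₘ M'))))
      rintro M ⟨h2, hcard, hsum⟩
      have hne : M ≠ 0 := by
        intro h; rw [h] at hcard; simp at hcard
      have hex : ∃ a ∈ M, c / ((n : ℚ) + 1) ≤ 1 / (a : ℚ) := by
        by_contra h
        push_neg at h
        have hlt := Multiset.sum_lt_sum_of_nonempty (s := M)
          (f := fun m : ℕ => (1 : ℚ) / m) (g := fun _ => c / ((n : ℚ) + 1)) hne h
        rw [hsum, Multiset.map_const', Multiset.sum_replicate, hcard] at hlt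
        have heq : (n + 1) • (c / ((n : ℚ) + 1)) = c := by
          rw [nsmul_eq_mul]
          push_cast
          field_simp
        rw [heq] at hlt
        exact lt_irrefl _ hlt
      obtain ⟨a, haM, ha⟩ := hex
      have ha2 : 2 ≤ a := h2 a haM
      have hapos : (0 : ℚ) < a := by positivity
      have haB : a ≤ B := by
        have h1 : (a : ℚ) ≤ ((n : ℚ) + 1) / c := by
          have hn1 : (0:ℚ) < (n:ℚ) + 1 := by positivity
          rw [div_le_div_iff₀ hn1 hapos] at ha
          rw [le_div_iff₀ hc]
          linarith [ha]
        have hceil := Nat.le_ceil (((n : ℚ) + 1) / c)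
        have : (a : ℚ) ≤ (B : ℚ) := h1.trans hceil
        exact_mod_cast this
      simp only [Set.mem_iUnion, Set.mem_image, Finset.coe_Icc, Set.mem_Icc]
      have hM : M = a ::ₘ M.erase a := (Multiset.cons_erase haM).symm
      refine ⟨a, ⟨ha2, haB⟩, M.erase a, ⟨?_, ?_, ?_⟩, Multiset.cons_erase haM⟩
      · exact fun m hm => h2 m (Multiset.mem_of_mem_erase hm)
      · have := Multiset.card_erase_of_mem haM
        rw [this, hcard]; rfl
      · rw [hM, Multiset.map_cons, Multiset.sum_cons] at hsum
        linarith
    · apply Set.Finite.subset (Set.finite_empty)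
      rintro M ⟨h2, hcard, hsum⟩
      have hne : M ≠ 0 := by intro h; rw [h] at hcard; simp at hcard
      obtain ⟨a, haM⟩ := Multiset.exists_mem_of_ne_zero hne
      have hall : ∀ x ∈ M.map (fun m : ℕ => 1 / (m : ℚ)), (0:ℚ) ≤ x := by
        intro x hx
        obtain ⟨m, hm, rfl⟩ := Multiset.mem_map.mp hx
        have : 2 ≤ m := h2 m hm
        positivity
      have hle := Multiset.single_le_sum hall (1 / (a : ℚ))
        (Multiset.mem_map_of_mem _ haM)
      have h2a : 2 ≤ a := h2 a haM
      have hpos : (0:ℚ) < 1 / (a : ℚ) := by positivity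
      rw [hsum] at hle
      exact absurd (hpos.trans_le hle) (by simpa using hc)

/-- For every positive rational `α` there are only finitely many pairs `(γ, M)`, where `γ`
is a nonnegative integer and `M` is a finite multiset of integers `m ≥ 2`, satisfying
`α = 2γ − 2 + Σ_{m ∈ M} (1 − 1/m)`. -/
theorem stmt_0 (α : ℚ) (hα : 0 < α) :
    {s : ℕ × Multiset ℕ | (∀ m ∈ s.2, 2 ≤ m) ∧
      α = 2 * (s.1 : ℚ) - 2 + (s.2.map (fun m => 1 - 1 / (m : ℚ))).sum}.Finite := by
  set G : ℕ := ⌈(α + 2) / 2⌉₊ + 1 with hG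
  set K : ℕ := ⌈2 * (α + 2)⌉₊ + 1 with hK
  apply Set.Finite.subset
    (Set.Finite.biUnion (Finset.range G).finite_toSet (fun γ _ =>
      Set.Finite.biUnion (Finset.range K).finite_toSet (fun k _ =>
        (egy k ((k : ℚ) + 2 * γ - (α + 2))).image (fun M => (γ, M)))))
  rintro ⟨γ, M⟩ ⟨h2, heq⟩
  simp only at h2 heq
  have hconv : (Multiset.map (fun m => 1 - 1 / (m : ℚ)) (M : Multiset ℕ) : Multiset ℚ)
      = M.map (fun m : ℕ => 1 - 1 / (m : ℚ)) := by
    simp only [bind_pure_comp, Functor.map, Multiset.map_map]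
    rfl
  rw [hconv] at heq
  have hterm : ∀ m ∈ M, (1:ℚ)/2 ≤ 1 - 1 / (m:ℚ) := by
    intro m hm
    have h2m : 2 ≤ m := h2 m hm
    have hm0 : (0:ℚ) < m := by positivity
    have : 1 / (m:ℚ) ≤ 1/2 := by
      apply div_le_div_of_nonneg_left (by norm_num) (by norm_num)
      exact_mod_cast h2m
    linarith
  have hsum_ge : (M.card : ℚ) * (1/2) ≤ (M.map (fun m : ℕ => 1 - 1 / (m : ℚ))).sum := by
    have h := Multiset.card_nsmul_le_sum
      (s := M.map (fun m : ℕ => 1 - 1 / (m:ℚ))) (a := (1:ℚ)/2) ?_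
    · rw [Multiset.card_map, nsmul_eq_mul] at h
      exact h
    · intro x hx
      obtain ⟨m, hm, rfl⟩ := Multiset.mem_map.mp hx
      exact hterm m hm
  have hsum_nonneg : (0:ℚ) ≤ (M.map (fun m : ℕ => 1 - 1 / (m : ℚ))).sum := by
    have : (0:ℚ) ≤ (M.card : ℚ) * (1/2) := by positivity
    linarith
  have hγ : (γ : ℚ) ≤ (α + 2) / 2 := by linarith
  have hγG : γ ∈ Finset.range G := by
    rw [Finset.mem_range, hG]
    have h1 : (γ:ℚ) ≤ (⌈(α + 2) / 2⌉₊ : ℚ) := hγ.trans (Nat.le_ceil _)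
    have h2' : γ ≤ ⌈(α + 2) / 2⌉₊ := by exact_mod_cast h1
    omega
  have hcard : (M.card : ℚ) ≤ 2 * (α + 2) := by
    have hγ0 : (0:ℚ) ≤ (γ:ℚ) := by positivity
    nlinarith [hsum_ge]
  have hkK : M.card ∈ Finset.range K := by
    rw [Finset.mem_range, hK]
    have h1 : (M.card : ℚ) ≤ (⌈2 * (α + 2)⌉₊ : ℚ) := hcard.trans (Nat.le_ceil _)
    have h2' : M.card ≤ ⌈2 * (α + 2)⌉₊ := by exact_mod_cast h1
    omega
  have hsplit := split_sum M
  simp only [Set.mem_iUnion, Set.mem_image]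
  exact ⟨γ, hγG, M.card, hkK, M, ⟨h2, rfl, by rw [hsplit] at heq; linarith⟩, rfl⟩
end

section
/- For every positive rational number β and every natural number k, there are only finitely many multisets {m_1, …, m_k} consisting of k integers m_i ≥ 2 such that Σ_{i=1}^k 1/m_i = β. -/
lemma sum_coe_eq (M : Multiset ℕ) :
    (M.map (fun m => 1 / (m : ℚ))).sum = (M.map (fun m : ℕ => 1 / (m : ℚ))).sum := by
  simp

theorem aux1 : ∀ (k : ℕ) (β : ℚ),
    {M : Multiset ℕ | Multiset.card M = k ∧ (∀ m ∈ M, 2 ≤ m) ∧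
      (M.map (fun m : ℕ => 1 / (m : ℚ))).sum = β}.Finite := by
  intro k
  induction k with
  | zero =>
    intro β
    apply Set.Finite.subset (Set.finite_singleton (0 : Multiset ℕ))
    rintro M ⟨hc, -, -⟩
    simp [Multiset.card_eq_zero.mp hc]
  | succ k ih =>
    intro β
    by_cases hβ : 0 < β
    · set N : ℕ := ⌊((k:ℚ)+1)/β⌋₊ with hN
      apply Set.Finite.subset
        (Set.Finite.biUnion (Finset.Icc 2 N).finite_toSet
          (fun m _ => ((ih (β - 1/(m:ℚ))).image (fun M' => m ::ₘ M'))))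
      rintro M ⟨hc, h2, hs⟩
      have hM0 : M ≠ 0 := by
        intro h; rw [h] at hc; simp at hc
      have hk1 : (0:ℚ) < (k:ℚ) + 1 := by positivity
      obtain ⟨m, hmM, hm⟩ : ∃ m ∈ M, β/((k:ℚ)+1) ≤ 1/(m:ℚ) := by
        by_contra h
        push_neg at h
        have hlt : (M.map (fun m : ℕ => 1/(m:ℚ))).sum <
            (M.map (fun _ : ℕ => β/((k:ℚ)+1))).sum :=
          Multiset.sum_lt_sum_of_nonempty hM0 h
        rw [Multiset.map_const', Multiset.sum_replicate, hc, hs] at hlt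
        rw [nsmul_eq_mul] at hlt
        push_cast at hlt
        rw [mul_div_cancel₀ β (ne_of_gt hk1)] at hlt
        exact lt_irrefl β hlt
      have hm2 : 2 ≤ m := h2 m hmM
      have hmpos : (0:ℚ) < (m:ℚ) := by
        have : 0 < m := lt_of_lt_of_le (by norm_num) hm2
        exact_mod_cast this
      have hmN : m ≤ N := by
        apply Nat.le_floor
        rw [div_le_div_iff₀ hk1 hmpos] at hm
        rw [le_div_iff₀ hβ]
        nlinarith [hm]
      obtain ⟨M', rfl⟩ := Multiset.exists_cons_of_mem hmM
      simp only [Set.mem_iUnion, Set.mem_image, Set.mem_setOf_eq]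
      refine ⟨m, Finset.mem_Icc.mpr ⟨hm2, hmN⟩, M', ⟨?_, ?_, ?_⟩, rfl⟩
      · simpa using hc
      · exact fun x hx => h2 x (Multiset.mem_cons_of_mem hx)
      · rw [Multiset.map_cons, Multiset.sum_cons] at hs
        linarith
    · apply Set.Finite.subset Set.finite_empty
      rintro M ⟨hc, h2, hs⟩
      exfalso
      have hM0 : M ≠ 0 := by
        intro h; rw [h] at hc; simp at hc
      have hpos : 0 < (M.map (fun m : ℕ => 1/(m:ℚ))).sum := by
        obtain ⟨a, ha⟩ := Multiset.exists_mem_of_ne_zero hM0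
        have hlt : (M.map (fun _ : ℕ => (0:ℚ))).sum <
            (M.map (fun m : ℕ => 1/(m:ℚ))).sum := by
          apply Multiset.sum_lt_sum
          · intro i hi
            have h2i : 2 ≤ i := h2 i hi
            have : (0:ℚ) < i := by exact_mod_cast lt_of_lt_of_le (by norm_num) h2i
            positivity
          · refine ⟨a, ha, ?_⟩
            have h2a : 2 ≤ a := h2 a ha
            have : (0:ℚ) < a := by exact_mod_cast lt_of_lt_of_le (by norm_num) h2a
            positivity
        simpa using hlt
      rw [hs] at hpos
      exact hβ hpos

/-- For every positive rational `β` and every natural number `k`, there are only finitely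
many multisets of `k` integers `m ≥ 2` with `Σ 1/m = β`. -/
theorem stmt_1 (β : ℚ) (hβ : 0 < β) (k : ℕ) :
    {M : Multiset ℕ | Multiset.card M = k ∧ (∀ m ∈ M, 2 ≤ m) ∧
      (M.map (fun m => 1 / (m : ℚ))).sum = β}.Finite := by
  have h : {M : Multiset ℕ | Multiset.card M = k ∧ (∀ m ∈ M, 2 ≤ m) ∧
      (M.map (fun m => 1 / (m : ℚ))).sum = β} =
      {M : Multiset ℕ | Multiset.card M = k ∧ (∀ m ∈ M, 2 ≤ m) ∧
      (M.map (fun m : ℕ => 1 / (m : ℚ))).sum = β} := by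
    ext M
    rw [Set.mem_setOf_eq, Set.mem_setOf_eq, sum_coe_eq]
  rw [h]
  exact aux1 k β
end

section
/- For every positive rational number ρ there are only finitely many pairs (γ, M), where γ is a nonnegative integer and M is a finite multiset of integers m ≥ 2, satisfying 2/ρ = 2γ − 2 + Σ_{m ∈ M} (1 − 1/m). -/
private lemma multiset_exists_max (s : Multiset ℚ) (hs : s ≠ 0) :
    ∃ a ∈ s, ∀ b ∈ s, b ≤ a := by
  induction s using Multiset.induction_on with
  | empty => simp at hs
  | cons a t ih =>
    rcases eq_or_ne t 0 with rfl | ht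
    · exact ⟨a, by simp, by simp⟩
    · obtain ⟨m, hm, hmax⟩ := ih ht
      rcases le_total a m with h | h
      · refine ⟨m, Multiset.mem_cons_of_mem hm, ?_⟩
        intro b hb
        rcases Multiset.mem_cons.mp hb with rfl | hb
        exacts [h, hmax b hb]
      · refine ⟨a, Multiset.mem_cons_self a t, ?_⟩
        intro b hb
        rcases Multiset.mem_cons.mp hb with rfl | hb
        exacts [le_refl b, (hmax b hb).trans h]

private lemma multiset_sum_pos' (s : Multiset ℚ) (hs : s ≠ 0) (h : ∀ x ∈ s, 0 < x) :
    0 < s.sum := by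
  induction s using Multiset.induction_on with
  | empty => simp at hs
  | cons a t ih =>
    rcases eq_or_ne t 0 with rfl | ht
    · simpa using h a (Multiset.mem_cons_self a _)
    · have := ih ht (fun x hx => h x (Multiset.mem_cons_of_mem hx))
      have ha := h a (Multiset.mem_cons_self a t)
      simp only [Multiset.sum_cons]
      linarith

private lemma sum_split (M : Multiset ℕ) :
    (M.map (fun m : ℕ => 1 / (m : ℚ))).sum
      = (M.card : ℚ) - (M.map (fun m : ℕ => 1 - 1 / (m : ℚ))).sum := by
  induction M using Multiset.induction_on with
  | empty => simp
  | cons a t ih =>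
    simp only [Multiset.map_cons, Multiset.sum_cons, Multiset.card_cons]
    push_cast
    rw [ih]
    ring

/-- Egyptian fractions: finitely many multisets of positive integers with a
given cardinality and a given sum of reciprocals. -/
private lemma key (k : ℕ) : ∀ q : ℚ,
    {M : Multiset ℕ | (∀ m ∈ M, 1 ≤ m) ∧ M.card = k ∧
      (M.map (fun m : ℕ => 1 / (m : ℚ))).sum = q}.Finite := by
  induction k with
  | zero =>
    intro q
    apply Set.Finite.subset (Set.finite_singleton (0 : Multiset ℕ))
    rintro M ⟨-, hc, -⟩
    simp [Multiset.card_eq_zero.mp hc]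
  | succ k ih =>
    intro q
    by_cases hq : 0 < q
    · set N := ⌈(k + 1 : ℚ) / q⌉₊ with hN
      apply Set.Finite.subset
        (Set.Finite.biUnion (Finset.Iic N).finite_toSet
          (fun a _ => (ih (q - 1 / a)).image (a ::ₘ ·)))
      rintro M ⟨h1, hc, hs⟩
      have hM0 : M ≠ 0 := by
        intro h
        rw [h] at hc; simp at hc
      have hmap0 : M.map (fun m : ℕ => 1 / (m : ℚ)) ≠ 0 := by
        simpa using hM0
      obtain ⟨y, hy, hymax⟩ := multiset_exists_max _ hmap0
      obtain ⟨a, haM, rfl⟩ := Multiset.mem_map.mp hy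
      have ha1 : 1 ≤ a := h1 a haM
      have hapos : (0 : ℚ) < a := by exact_mod_cast Nat.lt_of_lt_of_le Nat.zero_lt_one ha1
      have hsum_le : q ≤ (k + 1 : ℚ) * (1 / a) := by
        have := Multiset.sum_le_card_nsmul (M.map (fun m : ℕ => 1 / (m : ℚ))) (1 / (a : ℚ))
          (fun x hx => hymax x hx)
        rw [hs, Multiset.card_map, hc] at this
        simpa [nsmul_eq_mul] using this
      have haq : (a : ℚ) ≤ (k + 1 : ℚ) / q := by
        rw [le_div_iff₀ hq, mul_comm]
        calc q * a ≤ ((k + 1 : ℚ) * (1 / a)) * a := by nlinarith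
          _ = (k + 1 : ℚ) := by field_simp
      have haN : a ≤ N := by
        have : (a : ℚ) ≤ (N : ℚ) := haq.trans (Nat.le_ceil _)
        exact_mod_cast this
      refine Set.mem_biUnion (show a ∈ ((Finset.Iic N : Finset ℕ) : Set ℕ) by simpa using haN) ?_
      refine ⟨M.erase a, ⟨?_, ?_, ?_⟩, Multiset.cons_erase haM⟩
      · exact fun m hm => h1 m (Multiset.mem_of_mem_erase hm)
      · have := Multiset.card_erase_of_mem haM
        rw [hc] at this; simpa using this
      · have hME : M = a ::ₘ M.erase a := (Multiset.cons_erase haM).symm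
        have h2 : (M.map (fun m : ℕ => 1 / (m : ℚ))).sum
            = 1 / (a : ℚ) + ((M.erase a).map (fun m : ℕ => 1 / (m : ℚ))).sum := by
          conv_lhs => rw [hME]
          simp
        rw [hs] at h2
        linarith
    · convert Set.finite_empty
      ext M
      simp only [Set.mem_setOf_eq, Set.mem_empty_iff_false, iff_false]
      rintro ⟨h1, hc, hs⟩
      have hM0 : M ≠ 0 := by intro h; rw [h] at hc; simp at hc
      have : 0 < (M.map (fun m : ℕ => 1 / (m : ℚ))).sum := by
        apply multiset_sum_pos' _ (by simpa using hM0)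
        intro x hx
        obtain ⟨m, hm, rfl⟩ := Multiset.mem_map.mp hx
        have : 1 ≤ m := h1 m hm
        have : (1 : ℚ) ≤ m := by exact_mod_cast this
        positivity
      rw [hs] at this
      exact hq this

/-- For every positive rational `ρ` there are only finitely many signatures `(γ, M)`
satisfying `2/ρ = 2γ − 2 + Σ_{m ∈ M} (1 − 1/m)`. -/
theorem stmt_2 (ρ : ℚ) (hρ : 0 < ρ) :
    {s : ℕ × Multiset ℕ | (∀ m ∈ s.2, 2 ≤ m) ∧
      2 / ρ = 2 * (s.1 : ℚ) - 2 + (s.2.map (fun m => 1 - 1 / (m : ℚ))).sum}.Finite := by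
  have hset : {s : ℕ × Multiset ℕ | (∀ m ∈ s.2, 2 ≤ m) ∧
      2 / ρ = 2 * (s.1 : ℚ) - 2 + (s.2.map (fun m => 1 - 1 / (m : ℚ))).sum}
      = {s : ℕ × Multiset ℕ | (∀ m ∈ s.2, 2 ≤ m) ∧
      2 / ρ = 2 * (s.1 : ℚ) - 2 + (s.2.map (fun m : ℕ => 1 - 1 / (m : ℚ))).sum} := by
    ext s
    simp only [Set.mem_setOf_eq, Multiset.pure_def, Multiset.bind_def,
      Multiset.bind_singleton, Multiset.map_map, Function.comp_apply]
  rw [hset]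
  set C : ℚ := 2 / ρ + 2 with hC
  have hCpos : 0 < C := by positivity
  set G := ⌈C / 2⌉₊ with hG
  set K := ⌈2 * C⌉₊ with hK
  apply Set.Finite.subset
    (Set.Finite.biUnion ((Finset.Iic G) ×ˢ (Finset.Iic K)).finite_toSet
      (fun p _ => (key p.2 ((p.2 : ℚ) - (C - 2 * p.1))).image (fun M => (p.1, M))))
  rintro ⟨γ, M⟩ ⟨h2, heq⟩
  simp only at h2 heq
  set c : ℚ := C - 2 * γ with hc
  have hsum : (M.map (fun m : ℕ => 1 - 1 / (m : ℚ))).sum = c := by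
    rw [hc, hC]; linarith
  have hterm_lb : ∀ x ∈ M.map (fun m : ℕ => 1 - 1 / (m : ℚ)), (1/2 : ℚ) ≤ x := by
    intro x hx
    obtain ⟨m, hm, rfl⟩ := Multiset.mem_map.mp hx
    have h2m : 2 ≤ m := h2 m hm
    have h2m' : (2 : ℚ) ≤ m := by exact_mod_cast h2m
    have hmpos : (0 : ℚ) < m := by linarith
    have : 1 / (m : ℚ) ≤ 1 / 2 := by
      apply one_div_le_one_div_of_le <;> linarith
    linarith
  have hcard_le : (M.card : ℚ) * (1 / 2) ≤ c := by
    have := Multiset.card_nsmul_le_sum hterm_lb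
    rw [hsum, Multiset.card_map] at this
    simpa [nsmul_eq_mul] using this
  have hcnonneg : 0 ≤ c := by
    have : (0:ℚ) ≤ (M.card : ℚ) * (1/2) := by positivity
    linarith
  have hγ : γ ≤ G := by
    have h1 : (γ : ℚ) ≤ C / 2 := by rw [hc] at hcnonneg; linarith
    have : (γ : ℚ) ≤ (G : ℚ) := h1.trans (Nat.le_ceil _)
    exact_mod_cast this
  have hk : M.card ≤ K := by
    have hγ0 : (0:ℚ) ≤ (γ:ℚ) := by positivity
    have h1 : (M.card : ℚ) ≤ 2 * C := by
      have hcC : c ≤ C := by rw [hc]; linarith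
      linarith
    have : (M.card : ℚ) ≤ (K : ℚ) := h1.trans (Nat.le_ceil _)
    exact_mod_cast this
  have hmem : ((γ, M.card) : ℕ × ℕ) ∈ (((Finset.Iic G) ×ˢ (Finset.Iic K) : Finset (ℕ × ℕ)) : Set (ℕ × ℕ)) := by
    simp [hγ, hk]
  refine Set.mem_biUnion hmem ?_
  refine ⟨M, ⟨?_, rfl, ?_⟩, rfl⟩
  · exact fun m hm => le_trans (by norm_num) (h2 m hm)
  · rw [sum_split M, hsum]
end

section
/- The set of pairs (γ, M), where γ is a nonnegative integer and M is a finite multiset of integers m ≥ 2, such that μ := 2γ − 2 + Σ_{m ∈ M} (1 − 1/m) is positive and 2/μ is a positive integer, is finite. -/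
/-- The set of multisets of positive naturals with given cardinality and given
sum of reciprocals is finite. -/
lemma finite_recip_sum (k : ℕ) : ∀ q : ℚ,
    {M : Multiset ℕ | Multiset.card M = k ∧ (∀ m ∈ M, 1 ≤ m) ∧
      (M.map (fun m : ℕ => 1 / (m : ℚ))).sum = q}.Finite := by
  induction k with
  | zero =>
    intro q
    apply Set.Finite.subset (Set.finite_singleton (0 : Multiset ℕ))
    rintro M ⟨hc, -, -⟩
    simpa using Multiset.card_eq_zero.mp hc
  | succ k ih =>
    intro q
    rcases le_or_gt q 0 with hq | hq
    · convert Set.finite_empty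
      ext M
      simp only [Set.mem_setOf_eq, Set.mem_empty_iff_false, iff_false, not_and]
      rintro hc h1 hs
      have hM0 : M ≠ 0 := by
        intro h; rw [h] at hc; simp at hc
      obtain ⟨m, hm⟩ := Multiset.exists_mem_of_ne_zero hM0
      have hx : (1 / (m : ℚ)) ∈ M.map (fun m : ℕ => 1 / (m : ℚ)) :=
        Multiset.mem_map_of_mem _ hm
      have hpos : (0 : ℚ) < 1 / (m : ℚ) := by
        have h : (1 : ℚ) ≤ (m : ℚ) := by exact_mod_cast h1 m hm
        exact one_div_pos.mpr (lt_of_lt_of_le one_pos h)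
      have hle : (1 / (m : ℚ)) ≤ (M.map (fun m : ℕ => 1 / (m : ℚ))).sum := by
        apply Multiset.single_le_sum _ _ hx
        intro x hxm
        obtain ⟨a, ha, rfl⟩ := Multiset.mem_map.mp hxm
        positivity
      rw [hs] at hle
      linarith
    · set B := ⌈((k : ℚ) + 1) / q⌉₊ with hB
      apply Set.Finite.subset
        (Set.Finite.biUnion (Finset.range (B + 1)).finite_toSet
          (fun m _ => (ih (q - 1 / m)).image (fun M => m ::ₘ M)))
      rintro M ⟨hc, h1, hs⟩
      have hM0 : M ≠ 0 := by
        intro h; rw [h] at hc; simp at hc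
      have hTne : M.toFinset.Nonempty := by
        obtain ⟨m, hm⟩ := Multiset.exists_mem_of_ne_zero hM0
        exact ⟨m, Multiset.mem_toFinset.mpr hm⟩
      set m₀ := M.toFinset.min' hTne with hm₀def
      have hm₀M : m₀ ∈ M := Multiset.mem_toFinset.mp (M.toFinset.min'_mem hTne)
      have hm₀pos : (0 : ℚ) < (m₀ : ℚ) := by
        have := h1 m₀ hm₀M; exact_mod_cast Nat.lt_of_lt_of_le Nat.zero_lt_one this
      -- every element is ≥ m₀
      have hmin : ∀ m ∈ M, m₀ ≤ m := fun m hm =>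
        M.toFinset.min'_le m (Multiset.mem_toFinset.mpr hm)
      -- sum ≤ card • (1/m₀)
      have hsumle : (M.map (fun m : ℕ => 1 / (m : ℚ))).sum ≤
          (Multiset.card (M.map (fun m : ℕ => 1 / (m : ℚ)))) • (1 / (m₀ : ℚ)) := by
        apply Multiset.sum_le_card_nsmul
        intro x hx
        obtain ⟨a, ha, rfl⟩ := Multiset.mem_map.mp hx
        have h1a : (0 : ℚ) < (m₀ : ℚ) := hm₀pos
        have : (m₀ : ℚ) ≤ (a : ℚ) := by exact_mod_cast hmin a ha
        exact one_div_le_one_div_of_le h1a this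
      rw [Multiset.card_map, hc, hs] at hsumle
      have hq' : q ≤ ((k : ℚ) + 1) * (1 / (m₀ : ℚ)) := by
        have := hsumle
        rw [nsmul_eq_mul] at this
        push_cast at this ⊢
        linarith
      have hm₀le : (m₀ : ℚ) ≤ ((k : ℚ) + 1) / q := by
        rw [le_div_iff₀ hq]
        rw [mul_comm]
        calc q * (m₀ : ℚ) ≤ (((k : ℚ) + 1) * (1 / (m₀ : ℚ))) * (m₀ : ℚ) := by
              apply mul_le_mul_of_nonneg_right hq' (le_of_lt hm₀pos)
          _ = (k : ℚ) + 1 := by field_simp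
      have hm₀B : m₀ ≤ B := by
        have h2 : (m₀ : ℚ) ≤ (B : ℚ) := le_trans hm₀le (Nat.le_ceil _)
        exact_mod_cast h2
      refine Set.mem_biUnion (x := m₀)
        (Finset.mem_coe.mpr (Finset.mem_range.mpr (Nat.lt_succ_of_le hm₀B))) ?_
      refine ⟨M.erase m₀, ⟨?_, ?_, ?_⟩, Multiset.cons_erase hm₀M⟩
      · rw [Multiset.card_erase_of_mem hm₀M, hc]; rfl
      · intro m hm; exact h1 m (Multiset.mem_of_mem_erase hm)
      · have hcons : M = m₀ ::ₘ M.erase m₀ := (Multiset.cons_erase hm₀M).symm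
        have : (M.map (fun m : ℕ => 1 / (m : ℚ))).sum
            = 1 / (m₀ : ℚ) + ((M.erase m₀).map (fun m : ℕ => 1 / (m : ℚ))).sum := by
          conv_lhs => rw [hcons]
          rw [Multiset.map_cons, Multiset.sum_cons]
        rw [hs] at this
        linarith


lemma sum_map_one_sub (M : Multiset ℕ) :
    (M.map (fun m : ℕ => 1 - 1 / (m : ℚ))).sum
      = (Multiset.card M : ℚ) - (M.map (fun m : ℕ => 1 / (m : ℚ))).sum := by
  induction M using Multiset.induction with
  | empty => simp
  | cons a s ih =>
    simp only [Multiset.map_cons, Multiset.sum_cons, Multiset.card_cons, ih]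
    push_cast
    ring

/-- The set of signatures `(γ, M)` such that `μ := 2γ − 2 + Σ_{m ∈ M}(1 − 1/m)` is positive
and `2/μ` is a positive integer, is finite. -/
theorem stmt_3 :
    {s : ℕ × Multiset ℕ | (∀ m ∈ s.2, 2 ≤ m) ∧
      0 < 2 * (s.1 : ℚ) - 2 + (s.2.map (fun m => 1 - 1 / (m : ℚ))).sum ∧
      ∃ n : ℕ, 0 < n ∧
        2 / (2 * (s.1 : ℚ) - 2 + (s.2.map (fun m => 1 - 1 / (m : ℚ))).sum) = n}.Finite := by
  classical
  set A : ℕ → ℕ → Set (Multiset ℕ) := fun γ k =>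
    {M' : Multiset ℕ | Multiset.card M' = k + 2 ∧ (∀ m ∈ M', 1 ≤ m) ∧
      (M'.map (fun m : ℕ => 1 / (m : ℚ))).sum = 2 * (γ : ℚ) - 2 + k} with hAdef
  have hA : ∀ γ k, (A γ k).Finite := fun γ k =>
    finite_recip_sum (k + 2) (2 * (γ : ℚ) - 2 + k)
  set E : Set ℕ := ⋃ γ ∈ Finset.range 3, ⋃ k ∈ Finset.range 9, ⋃ M' ∈ A γ k,
    (M'.toFinset : Set ℕ) with hEdef
  have hE : E.Finite :=
    Set.Finite.biUnion (Finset.range 3).finite_toSet (fun γ _ =>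
      Set.Finite.biUnion (Finset.range 9).finite_toSet (fun k _ =>
        Set.Finite.biUnion (hA γ k) (fun M' _ => M'.toFinset.finite_toSet)))
  apply Set.Finite.subset
    (Set.Finite.biUnion (Finset.range 3).finite_toSet (fun γ _ =>
      Set.Finite.biUnion (Finset.range 9).finite_toSet (fun k _ =>
        Set.Finite.biUnion hE (fun n _ =>
          (Set.finite_singleton γ).prod
            (finite_recip_sum k (2 * (γ : ℚ) - 2 + k - 2 * (1 / (n : ℚ))))))))
  rintro ⟨γ, M⟩ ⟨h2, hpos, n, hn, heq⟩
  simp only at h2 hpos heq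
  have hbridge : (M.map (fun m => 1 - 1 / (m : ℚ))).sum
      = (M.map (fun m : ℕ => 1 - 1 / (m : ℚ))).sum := by
    simp [Multiset.map_map, Function.comp]
  rw [hbridge] at hpos heq
  set Sg : ℚ := (M.map (fun m : ℕ => 1 - 1 / (m : ℚ))).sum with hSgdef
  set R : ℚ := (M.map (fun m : ℕ => 1 / (m : ℚ))).sum with hRdef
  have hsub : Sg = (Multiset.card M : ℚ) - R := sum_map_one_sub M
  have hn0 : (0 : ℚ) < (n : ℚ) := by exact_mod_cast hn
  have hμrat : 2 * (γ : ℚ) - 2 + Sg = 2 * (1 / (n : ℚ)) := by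
    rw [div_eq_iff (ne_of_gt hpos)] at heq
    field_simp
    linarith
  have hterm : ∀ x ∈ M.map (fun m : ℕ => 1 - 1 / (m : ℚ)), (1/2 : ℚ) ≤ x := by
    intro x hx
    obtain ⟨a, ha, rfl⟩ := Multiset.mem_map.mp hx
    have h2a : (2 : ℚ) ≤ (a : ℚ) := by exact_mod_cast h2 a ha
    have : 1 / (a : ℚ) ≤ 1 / 2 := one_div_le_one_div_of_le (by norm_num) h2a
    linarith
  have hShalf : (Multiset.card M : ℚ) * (1/2) ≤ Sg := by
    have := Multiset.card_nsmul_le_sum hterm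
    rwa [Multiset.card_map, nsmul_eq_mul] at this
  have hS0 : (0 : ℚ) ≤ Sg := by
    have hcard0 : (0 : ℚ) ≤ (Multiset.card M : ℚ) := by positivity
    nlinarith
  have hn1 : (1 : ℚ) ≤ (n : ℚ) := by exact_mod_cast hn
  have hinvn : 1 / (n : ℚ) ≤ 1 := by
    rw [div_le_one hn0]; exact hn1
  have hγ : γ < 3 := by
    by_contra h
    push_neg at h
    have : (3 : ℚ) ≤ (γ : ℚ) := by exact_mod_cast h
    linarith
  have hk : Multiset.card M < 9 := by
    by_contra h
    push_neg at h
    have : (9 : ℚ) ≤ (Multiset.card M : ℚ) := by exact_mod_cast h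
    have hγ0 : (0 : ℚ) ≤ (γ : ℚ) := by positivity
    linarith
  have hRval : R = 2 * (γ : ℚ) - 2 + (Multiset.card M : ℚ) - 2 * (1 / (n : ℚ)) := by
    linarith
  -- n ∈ E
  have hnE : n ∈ E := by
    have hM' : (n ::ₘ n ::ₘ M) ∈ A γ (Multiset.card M) := by
      refine ⟨by simp, ?_, ?_⟩
      · intro m hm
        rcases Multiset.mem_cons.mp hm with rfl | hm
        · exact hn
        rcases Multiset.mem_cons.mp hm with rfl | hm
        · exact hn
        · exact le_trans (by norm_num) (h2 m hm)
      · simp only [Multiset.map_cons, Multiset.sum_cons, ← hRdef]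
        rw [hRval]; ring
    rw [hEdef]
    refine Set.mem_biUnion (Finset.mem_coe.mpr (Finset.mem_range.mpr hγ)) ?_
    refine Set.mem_biUnion (Finset.mem_coe.mpr (Finset.mem_range.mpr hk)) ?_
    refine Set.mem_biUnion (x := (n ::ₘ n ::ₘ M)) hM' ?_
    simp
  refine Set.mem_biUnion (Finset.mem_coe.mpr (Finset.mem_range.mpr hγ)) ?_
  refine Set.mem_biUnion (Finset.mem_coe.mpr (Finset.mem_range.mpr hk)) ?_
  refine Set.mem_biUnion hnE ?_
  exact ⟨rfl, rfl, fun m hm => le_trans (by norm_num) (h2 m hm), hRval⟩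
end

section
/- Let p be a prime, k ≥ 1 an integer, and a a nonzero element of ZMod p. The number t_k of k-tuples (x_1, …, x_k) ∈ (ZMod p)^k with x_i ≠ 0 for every i and x_1 + ⋯ + x_k = a is given by t_k = ((p−1)^k − (−1)^k)/p; equivalently, p·t_k = (p−1)^k − (−1)^k as integers. In particular t_k is independent of the choice of the nonzero element a. -/
open Finset

private lemma card_split (p k : ℕ) (a : ZMod p) :
    Nat.card {x : Fin (k+1) → ZMod p // (∀ i, x i ≠ 0) ∧ ∑ i, x i = a}
      = Nat.card {y : Fin k → ZMod p // (∀ i, y i ≠ 0) ∧ ∑ i, y i ≠ a} := by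
  apply Nat.card_congr
  refine ⟨fun x => ⟨Fin.init x.1, fun i => x.2.1 _, ?_⟩,
    fun y => ⟨Fin.snoc y.1 (a - ∑ i, y.1 i), fun i => ?_, ?_⟩, ?_, ?_⟩
  · intro h
    have h2 := x.2.2
    rw [Fin.sum_univ_castSucc] at h2
    have he : ∑ i : Fin k, Fin.init x.1 i = ∑ i : Fin k, x.1 i.castSucc := rfl
    rw [← he, h] at h2
    exact x.2.1 (Fin.last k) (add_eq_left.mp h2)
  · refine Fin.lastCases ?_ (fun j => ?_) i
    · rw [Fin.snoc_last]
      exact sub_ne_zero.mpr (Ne.symm y.2.2)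
    · rw [Fin.snoc_castSucc]
      exact y.2.1 j
  · rw [Fin.sum_univ_castSucc]
    simp
  · intro x
    have hl : a - ∑ i : Fin k, Fin.init x.1 i = x.1 (Fin.last k) := by
      have h2 := x.2.2
      rw [Fin.sum_univ_castSucc] at h2
      have he : ∑ i : Fin k, Fin.init x.1 i = ∑ i : Fin k, x.1 i.castSucc := rfl
      rw [he]
      exact sub_eq_iff_eq_add'.mpr h2.symm
    exact Subtype.ext (by simp only [hl, Fin.snoc_init_self])
  · intro y
    refine Subtype.ext ?_
    simp [Fin.init_snoc]

private lemma card_nonzero (p k : ℕ) [NeZero p] :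
    Nat.card {y : Fin k → ZMod p // ∀ i, y i ≠ 0} = (p - 1) ^ k := by
  rw [Nat.card_congr (Equiv.subtypePiEquivPi (p := fun (_ : Fin k) (z : ZMod p) => z ≠ 0))]
  rw [Nat.card_pi]
  have : Nat.card {z : ZMod p // z ≠ 0} = p - 1 := by
    rw [Nat.card_eq_fintype_card, Fintype.card_subtype_compl, ZMod.card]
    simp
  simp [this]

private lemma card_partition (p k : ℕ) [NeZero p] (a : ZMod p) :
    Nat.card {y : Fin k → ZMod p // (∀ i, y i ≠ 0) ∧ ∑ i, y i = a}
      + Nat.card {y : Fin k → ZMod p // (∀ i, y i ≠ 0) ∧ ∑ i, y i ≠ a}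
      = Nat.card {y : Fin k → ZMod p // ∀ i, y i ≠ 0} := by
  simp only [Nat.card_eq_fintype_card, Fintype.card_subtype]
  rw [← Finset.card_filter_add_card_filter_not
    (s := univ.filter (fun y : Fin k → ZMod p => ∀ i, y i ≠ 0))
    (p := fun y => ∑ i, y i = a)]
  rw [Finset.filter_filter, Finset.filter_filter]

/-- For a fixed nonzero `a` in `ZMod p`, the number `t_k` of `k`-tuples with all entries
nonzero and sum `a` satisfies `p·t_k = (p−1)^k − (−1)^k`; in particular it is independent
of the choice of `a`. -/
theorem stmt_7 (p : ℕ) (hp : p.Prime) (k : ℕ) (hk : 1 ≤ k) (a : ZMod p) (ha : a ≠ 0) :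
    (p : ℤ) * Nat.card {x : Fin k → ZMod p // (∀ i, x i ≠ 0) ∧ ∑ i, x i = a}
      = ((p : ℤ) - 1) ^ k - (-1) ^ k := by
  haveI : NeZero p := ⟨hp.ne_zero⟩
  induction k with
  | zero => omega
  | succ n ih =>
    rcases Nat.eq_zero_or_pos n with hn | hn
    · subst hn
      have h1 : Nat.card {x : Fin 1 → ZMod p // (∀ i, x i ≠ 0) ∧ ∑ i, x i = a} = 1 := by
        rw [Nat.card_eq_one_iff_unique]
        refine ⟨⟨?_⟩, ⟨⟨fun _ => a, fun i => ha, by simp⟩⟩⟩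
        rintro ⟨x, hx1, hx2⟩ ⟨y, hy1, hy2⟩
        rw [Fin.sum_univ_one] at hx2 hy2
        apply Subtype.ext
        funext i
        have hi : i = 0 := Subsingleton.elim i 0
        rw [hi]
        show x 0 = y 0
        rw [hx2, hy2]
      rw [h1]
      push_cast
      ring
    · have key := card_split p n a
      have hcast : (Nat.card {y : Fin n → ZMod p // (∀ i, y i ≠ 0) ∧ ∑ i, y i ≠ a} : ℤ)
          = ((p:ℤ) - 1) ^ n
            - Nat.card {y : Fin n → ZMod p // (∀ i, y i ≠ 0) ∧ ∑ i, y i = a} := by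
        have hpart := congrArg (fun m : ℕ => (m : ℤ)) (card_partition p n a)
        simp only [Nat.cast_add] at hpart
        have h2 : ((Nat.card {y : Fin n → ZMod p // ∀ i, y i ≠ 0} : ℤ)) = ((p:ℤ)-1)^n := by
          rw [card_nonzero]
          push_cast [Nat.cast_sub hp.one_lt.le]
          ring
        linarith
      rw [key, hcast]
      linear_combination (-1 : ℤ) * ih hn
end

section
/- Let γ ≥ 0 and k ≥ 1 be integers, let p be a prime, and let Γ be the group with presentation ⟨A_1, B_1, …, A_γ, B_γ, X_1, …, X_k | ∏_{j=1}^γ [A_j,B_j] · X_1 X_2 ⋯ X_k = 1, X_1^p = ⋯ = X_k^p = 1⟩. Then the number of normal subgroups N of index p in Γ such that X_i ∉ N for every i = 1, …, k equals p^{2γ−1}·((p−1)^{k−1} + (−1)^k); equivalently, the number of surjective homomorphisms θ : Γ → ZMod p with θ(X_i) ≠ 0 for all i equals p^{2γ−1}·(p−1)·((p−1)^{k−1} + (−1)^k). (When γ = 0 these expressions are still integers, since p divides (p−1)^{k−1} + (−1)^k.) -/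
/-- The long relator `∏_{j=1}^γ [A_j, B_j] · X_1 ⋯ X_k` of a Fuchsian group presentation,
on generators `A_j = Sum.inl (Sum.inl j)`, `B_j = Sum.inl (Sum.inr j)`, `X_i = Sum.inr i`. -/
def longRelator (γ k : ℕ) : FreeGroup ((Fin γ ⊕ Fin γ) ⊕ Fin k) :=
  ((List.finRange γ).map (fun j =>
    FreeGroup.of (Sum.inl (Sum.inl j)) * FreeGroup.of (Sum.inl (Sum.inr j)) *
      (FreeGroup.of (Sum.inl (Sum.inl j)))⁻¹ * (FreeGroup.of (Sum.inl (Sum.inr j)))⁻¹)).prod *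
  ((List.finRange k).map (fun i => FreeGroup.of (Sum.inr i))).prod

/-- Relators of the presentation
`⟨A_j, B_j, X_i | ∏ [A_j,B_j] · X_1 ⋯ X_k, X_1^p, …, X_k^p⟩`. -/
def sigRels (γ k p : ℕ) : Set (FreeGroup ((Fin γ ⊕ Fin γ) ⊕ Fin k)) :=
  {longRelator γ k} ∪ Set.range (fun i : Fin k => (FreeGroup.of (Sum.inr i)) ^ p)

/-! ### Auxiliary material -/

section Aux

/-- tuples of nonzero elements of `ZMod p` summing to zero -/
def SS (p k : ℕ) := {x : Fin k → ZMod p // (∀ i, x i ≠ 0) ∧ ∑ i, x i = 0}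

variable (p : ℕ) [Fact p.Prime]

noncomputable def snocEquiv (k : ℕ) :
    SS p (k + 1) ≃ {y : Fin k → ZMod p // (∀ i, y i ≠ 0) ∧ ¬ (∑ i, y i = 0)} where
  toFun x := ⟨fun i => x.1 i.castSucc, fun i => x.2.1 _, by
    have := x.2.2
    rw [Fin.sum_univ_castSucc] at this
    intro h
    rw [h, zero_add] at this
    exact x.2.1 (Fin.last k) this⟩
  invFun y := ⟨Fin.snoc y.1 (-∑ i, y.1 i), by
    constructor
    · intro i
      refine Fin.lastCases ?_ ?_ i
      · simpa [Fin.snoc_last] using fun h => y.2.2 (neg_eq_zero.mp h)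
      · intro j; simpa [Fin.snoc_castSucc] using y.2.1 j
    · rw [Fin.sum_univ_castSucc]
      simp [Fin.snoc_castSucc, Fin.snoc_last]⟩
  left_inv x := by
    apply Subtype.ext
    funext i
    refine Fin.lastCases ?_ ?_ i
    · have := x.2.2
      rw [Fin.sum_univ_castSucc] at this
      simp only [Fin.snoc_last]
      linear_combination -this
    · intro j; simp [Fin.snoc_castSucc]
  right_inv y := by
    apply Subtype.ext
    funext i
    simp [Fin.snoc_castSucc]

lemma SS_one : Nat.card (SS p 1) = 0 := by
  rw [Nat.card_eq_zero]
  left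
  constructor
  rintro ⟨x, h1, h2⟩
  exact h1 0 (by simpa [Fin.sum_univ_one] using h2)

open Classical in
lemma card_allne (k : ℕ) :
    Nat.card {y : Fin k → ZMod p // ∀ i, y i ≠ 0} = (p - 1) ^ k := by
  have e : {y : Fin k → ZMod p // ∀ i, y i ≠ 0} ≃ (Fin k → {z : ZMod p // z ≠ 0}) :=
    Equiv.subtypePiEquivPi (p := fun _ z => z ≠ 0)
  rw [Nat.card_congr e, Nat.card_fun]
  congr 1
  · rw [Nat.card_eq_fintype_card, Fintype.card_subtype_compl, Fintype.card_subtype_eq, ZMod.card]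
  · simp [Nat.card_eq_fintype_card]

open Classical in
lemma card_split_s9 {α : Type*} [Fintype α] (P Q : α → Prop) :
    Nat.card {y : α // P y ∧ Q y} + Nat.card {y : α // P y ∧ ¬ Q y} = Nat.card {y : α // P y} := by
  classical
  have e1 : {y : α // P y ∧ Q y} ≃ {z : {y : α // P y} // Q z.1} :=
    (Equiv.subtypeSubtypeEquivSubtypeInter P Q).symm
  have e2 : {y : α // P y ∧ ¬ Q y} ≃ {z : {y : α // P y} // ¬ Q z.1} :=
    (Equiv.subtypeSubtypeEquivSubtypeInter P (fun y => ¬ Q y)).symm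
  rw [Nat.card_congr e1, Nat.card_congr e2, ← Nat.card_sum,
    Nat.card_congr (Equiv.sumCompl (fun z : {y : α // P y} => Q z.1))]

lemma SS_rec (k : ℕ) : Nat.card (SS p k) + Nat.card (SS p (k + 1)) = (p - 1) ^ k := by
  rw [Nat.card_congr (snocEquiv p k)]
  rw [← card_allne p k]
  exact card_split_s9 (fun y : Fin k → ZMod p => ∀ i, y i ≠ 0) (fun y => ∑ i, y i = 0)

lemma SS_card : ∀ k, 1 ≤ k →
    (p : ℤ) * Nat.card (SS p k) = ((p : ℤ) - 1) ^ k + (-1) ^ k * ((p : ℤ) - 1) := by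
  have hp1 : 1 ≤ p := (Fact.out : p.Prime).one_lt.le
  intro k
  induction k with
  | zero => omega
  | succ k ih =>
    intro _
    rcases Nat.eq_zero_or_pos k with h | h
    · subst h
      rw [SS_one]
      push_cast
      ring
    · have hk : 1 ≤ k := h
      have hr := SS_rec p k
      have hr' : (Nat.card (SS p k) : ℤ) + Nat.card (SS p (k + 1)) = ((p : ℤ) - 1) ^ k := by
        have := congrArg (fun n : ℕ => (n : ℤ)) hr
        push_cast at this
        rw [Nat.cast_sub hp1] at this
        push_cast at this
        linarith [this]
      have hthis := ih hk
      have key : (p : ℤ) * Nat.card (SS p (k + 1))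
          = (p : ℤ) * (((p:ℤ)-1)^k) - ((p:ℤ)-1)^k - (-1)^k * ((p:ℤ)-1) := by
        linear_combination (p : ℤ) * hr' - hthis
      rw [key]
      ring

lemma zmod_pow_p (z : Multiplicative (ZMod p)) : z ^ p = 1 := by
  have : p • z.toAdd = 0 := by
    rw [nsmul_eq_mul, ZMod.natCast_self, zero_mul]
  rw [← toAdd_eq_zero, toAdd_pow, this]

lemma zmod_gen (a c : Multiplicative (ZMod p)) (ha : a ≠ 1) : ∃ n : ℕ, a ^ n = c := by
  have ha' : a.toAdd ≠ 0 := by simpa [← toAdd_eq_zero] using ha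
  refine ⟨(c.toAdd / a.toAdd).val, ?_⟩
  refine Multiplicative.toAdd.injective ?_
  rw [toAdd_pow, nsmul_eq_mul, ZMod.natCast_val, ZMod.cast_id, div_mul_cancel₀ _ ha']

lemma surj_of_ne_one {G : Type*} [Group G] (θ : G →* Multiplicative (ZMod p)) (g : G)
    (hg : θ g ≠ 1) : Function.Surjective θ := by
  intro c
  obtain ⟨n, hn⟩ := zmod_gen p (θ g) c hg
  exact ⟨g ^ n, by rw [map_pow, hn]⟩

lemma card_multzmod : Nat.card (Multiplicative (ZMod p)) = p := by
  haveI : NeZero p := ⟨(Fact.out : p.Prime).ne_zero⟩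
  rw [Nat.card_congr Multiplicative.toAdd, Nat.card_eq_fintype_card]
  exact ZMod.card p

lemma card_ne_one : Nat.card {u : Multiplicative (ZMod p) // u ≠ 1} = p - 1 := by
  have e : {u : Multiplicative (ZMod p) // u ≠ 1} ≃ {z : ZMod p // z ≠ 0} :=
    Multiplicative.toAdd.subtypeEquiv (fun u => by simp [← toAdd_eq_zero])
  rw [Nat.card_congr e, Nat.card_eq_fintype_card, Fintype.card_subtype_compl,
    Fintype.card_subtype_eq, ZMod.card]

lemma hom_ext_ker {G : Type*} [Group G] (θ θ' : G →* Multiplicative (ZMod p)) (g : G)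
    (hker : θ.ker = θ'.ker) (hg : θ g = θ' g) (hne : θ g ≠ 1) : θ = θ' := by
  ext x
  obtain ⟨n, hn⟩ := zmod_gen p (θ g) (θ x) hne
  have hmem : x * (g ^ n)⁻¹ ∈ θ.ker := by
    rw [MonoidHom.mem_ker, map_mul, map_inv, map_pow, hn, mul_inv_cancel]
  rw [hker, MonoidHom.mem_ker, map_mul, map_inv, map_pow, mul_inv_eq_one] at hmem
  rw [hmem, ← hg]
  exact hn.symm

/-- scaling homomorphism -/
noncomputable def scaleHom (c : ZMod p) : Multiplicative (ZMod p) →* Multiplicative (ZMod p) :=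
  AddMonoidHom.toMultiplicative (AddMonoidHom.mulLeft c)

lemma scaleHom_injective (c : ZMod p) (hc : c ≠ 0) : Function.Injective (scaleHom p c) := by
  intro a b hab
  have : c * a.toAdd = c * b.toAdd := hab
  exact Multiplicative.toAdd.injective (mul_left_cancel₀ hc this)

lemma longRelator_image {γ k : ℕ} {G : Type*} [CommGroup G]
    (ψ : FreeGroup ((Fin γ ⊕ Fin γ) ⊕ Fin k) →* G) :
    ψ (longRelator γ k) = ∏ i : Fin k, ψ (FreeGroup.of (Sum.inr i)) := by
  unfold longRelator
  rw [map_mul, map_list_prod, map_list_prod]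
  have h1 : ((List.finRange γ).map (fun j =>
      FreeGroup.of (Sum.inl (Sum.inl j)) * FreeGroup.of (Sum.inl (Sum.inr j)) *
        (FreeGroup.of (Sum.inl (Sum.inl j)))⁻¹ * (FreeGroup.of (Sum.inl (Sum.inr j)))⁻¹)).map ψ
      = List.replicate γ 1 := by
    rw [List.map_map, List.eq_replicate_iff]
    constructor
    · simp
    · intro b hb
      simp only [List.mem_map, Function.comp_apply] at hb
      obtain ⟨j, _, rfl⟩ := hb
      rw [map_mul, map_mul, map_mul, map_inv, map_inv,
        mul_comm (ψ (FreeGroup.of (Sum.inl (Sum.inl j)))) (ψ (FreeGroup.of (Sum.inl (Sum.inr j))))]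
      group
  rw [h1, List.prod_replicate, one_pow, one_mul, List.map_map, Fin.prod_univ_def]
  rfl

variable (γ k : ℕ)

lemma rels_satisfied (f : ((Fin γ ⊕ Fin γ) ⊕ Fin k) → Multiplicative (ZMod p))
    (hf : ∏ i : Fin k, f (Sum.inr i) = 1) :
    ∀ r ∈ sigRels γ k p, FreeGroup.lift f r = 1 := by
  rintro r (rfl | ⟨i, rfl⟩)
  · rw [longRelator_image]
    simpa using hf
  · rw [map_pow, zmod_pow_p]

lemma hom_prod (θ : PresentedGroup (sigRels γ k p) →* Multiplicative (ZMod p)) :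
    ∏ i : Fin k, θ (PresentedGroup.of (Sum.inr i)) = 1 := by
  have h1 : PresentedGroup.mk (sigRels γ k p) (longRelator γ k) = 1 := by
    apply (QuotientGroup.eq_one_iff _).mpr
    exact Subgroup.subset_normalClosure (Or.inl rfl)
  have := longRelator_image (θ.comp (PresentedGroup.mk (sigRels γ k p)))
  simp only [MonoidHom.comp_apply] at this
  rw [h1, map_one] at this
  exact this.symm

noncomputable def homEquiv :
    {θ : PresentedGroup (sigRels γ k p) →* Multiplicative (ZMod p) //
        ∀ i : Fin k, θ (PresentedGroup.of (Sum.inr i)) ≠ 1} ≃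
      ((Fin γ ⊕ Fin γ) → ZMod p) × (SS p k) where
  toFun θ :=
    ⟨fun j => (θ.1 (PresentedGroup.of (Sum.inl j))).toAdd,
     ⟨fun i => (θ.1 (PresentedGroup.of (Sum.inr i))).toAdd,
      fun i => by simpa [toAdd_eq_zero] using θ.2 i,
      by rw [← toAdd_prod]; rw [hom_prod p γ k θ.1]; rfl⟩⟩
  invFun fx :=
    ⟨PresentedGroup.toGroup (f := Sum.elim (fun j => Multiplicative.ofAdd (fx.1 j))
        (fun i => Multiplicative.ofAdd (fx.2.1 i)))
      (rels_satisfied p γ k _ (by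
        simp only [Sum.elim_inr, ← ofAdd_sum, fx.2.2.2]
        rfl)),
     fun i => by
      rw [PresentedGroup.toGroup.of]
      simpa [Sum.elim_inr, ofAdd_eq_one] using fx.2.2.1 i⟩
  left_inv θ := by
    apply Subtype.ext
    apply PresentedGroup.ext
    rintro (j | i) <;> simp [PresentedGroup.toGroup.of]
  right_inv fx := by
    refine Prod.ext ?_ (Subtype.ext ?_) <;> funext x <;> simp [PresentedGroup.toGroup.of]

end Aux

section Main

variable (γ k p : ℕ) [Fact p.Prime] (hk : 1 ≤ k)

lemma main_bij (hk : 1 ≤ k) :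
    Nat.card {θ : PresentedGroup (sigRels γ k p) →* Multiplicative (ZMod p) //
        Function.Surjective θ ∧ ∀ i : Fin k, θ (PresentedGroup.of (Sum.inr i)) ≠ 1}
    = Nat.card {N : Subgroup (PresentedGroup (sigRels γ k p)) //
        N.Normal ∧ N.index = p ∧ ∀ i : Fin k, PresentedGroup.of (Sum.inr i) ∉ N} * (p - 1) := by
  set i₀ : Fin k := ⟨0, hk⟩
  set X₀ : PresentedGroup (sigRels γ k p) := PresentedGroup.of (Sum.inr i₀) with hX₀
  set F : {θ : PresentedGroup (sigRels γ k p) →* Multiplicative (ZMod p) //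
        Function.Surjective θ ∧ ∀ i : Fin k, θ (PresentedGroup.of (Sum.inr i)) ≠ 1} →
      {N : Subgroup (PresentedGroup (sigRels γ k p)) //
        N.Normal ∧ N.index = p ∧ ∀ i : Fin k, PresentedGroup.of (Sum.inr i) ∉ N} ×
      {u : Multiplicative (ZMod p) // u ≠ 1} :=
    fun θ => ⟨⟨θ.1.ker, inferInstance,
      by rw [Subgroup.index_ker, MonoidHom.range_eq_top.mpr θ.2.1, Subgroup.card_top,
          card_multzmod],
      fun i hi => θ.2.2 i (MonoidHom.mem_ker.mp hi)⟩,
      ⟨θ.1 X₀, θ.2.2 i₀⟩⟩ with hF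
  have hbij : Function.Bijective F := by
    constructor
    · rintro ⟨θ, hθ⟩ ⟨θ', hθ'⟩ h
      simp only [hF, Prod.mk.injEq, Subtype.mk.injEq] at h
      exact Subtype.ext (hom_ext_ker p θ θ' X₀ h.1 h.2 (hθ.2 i₀))
    · rintro ⟨⟨N, hNorm, hInd, hX⟩, ⟨u, hu⟩⟩
      haveI := hNorm
      have hcard : Nat.card (PresentedGroup (sigRels γ k p) ⧸ N) = p := hInd
      let θ₀ : PresentedGroup (sigRels γ k p) →* Multiplicative (ZMod p) :=
        (mulEquivOfPrimeCardEq hcard (card_multzmod p)).toMonoidHom.comp (QuotientGroup.mk' N)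
      have hker₀ : ∀ x, θ₀ x = 1 ↔ x ∈ N := by
        intro x
        simp only [θ₀, MonoidHom.comp_apply, MulEquiv.coe_toMonoidHom]
        rw [MulEquiv.map_eq_one_iff]
        exact QuotientGroup.eq_one_iff x
      have ha : θ₀ X₀ ≠ 1 := fun h => hX i₀ ((hker₀ X₀).mp h)
      have ha' : (θ₀ X₀).toAdd ≠ 0 := by simpa [← toAdd_eq_zero] using ha
      have hu' : u.toAdd ≠ 0 := by simpa [← toAdd_eq_zero] using hu
      set c : ZMod p := u.toAdd / (θ₀ X₀).toAdd with hc
      have hcne : c ≠ 0 := div_ne_zero hu' ha'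
      set θ : PresentedGroup (sigRels γ k p) →* Multiplicative (ZMod p) :=
        (scaleHom p c).comp θ₀ with hθdef
      have hkerθ : ∀ x, θ x = 1 ↔ x ∈ N := by
        intro x
        rw [← hker₀ x]
        constructor
        · intro h
          exact scaleHom_injective p c hcne (by rw [← map_one (scaleHom p c)] at h; exact h)
        · intro h
          simp [hθdef, MonoidHom.comp_apply, h]
      have hθX₀ : θ X₀ = u := by
        refine Multiplicative.toAdd.injective ?_
        show c * (θ₀ X₀).toAdd = u.toAdd
        rw [hc, div_mul_cancel₀ _ ha']
      have hsurj : Function.Surjective θ :=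
        surj_of_ne_one p θ X₀ (by rw [hθX₀]; exact hu)
      have hne : ∀ i : Fin k, θ (PresentedGroup.of (Sum.inr i)) ≠ 1 :=
        fun i h => hX i ((hkerθ _).mp h)
      refine ⟨⟨θ, hsurj, hne⟩, ?_⟩
      simp only [hF, Prod.mk.injEq, Subtype.mk.injEq]
      constructor
      · ext x
        rw [MonoidHom.mem_ker]
        exact hkerθ x
      · exact hθX₀
  rw [Nat.card_congr (Equiv.ofBijective F hbij), Nat.card_prod, card_ne_one]

theorem stmt_9' (hk : 1 ≤ k) (hp : p.Prime) :
    (p : ℤ) * Nat.card {N : Subgroup (PresentedGroup (sigRels γ k p)) //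
        N.Normal ∧ N.index = p ∧ ∀ i : Fin k, PresentedGroup.of (Sum.inr i) ∉ N}
      = (p : ℤ) ^ (2 * γ) * (((p : ℤ) - 1) ^ (k - 1) + (-1) ^ k) ∧
    (p : ℤ) * Nat.card {θ : PresentedGroup (sigRels γ k p) →* Multiplicative (ZMod p) //
        Function.Surjective θ ∧ ∀ i : Fin k, θ (PresentedGroup.of (Sum.inr i)) ≠ 1}
      = (p : ℤ) ^ (2 * γ) * ((p : ℤ) - 1) * (((p : ℤ) - 1) ^ (k - 1) + (-1) ^ k) := by
  obtain ⟨m, rfl⟩ : ∃ m, k = m + 1 := ⟨k - 1, by omega⟩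
  set k := m + 1
  have hp1 : 1 ≤ p := hp.one_lt.le
  -- drop the redundant surjectivity condition
  have hdrop :
      Nat.card {θ : PresentedGroup (sigRels γ k p) →* Multiplicative (ZMod p) //
        Function.Surjective θ ∧ ∀ i : Fin k, θ (PresentedGroup.of (Sum.inr i)) ≠ 1}
      = Nat.card {θ : PresentedGroup (sigRels γ k p) →* Multiplicative (ZMod p) //
        ∀ i : Fin k, θ (PresentedGroup.of (Sum.inr i)) ≠ 1} := by
    apply Nat.card_congr
    apply Equiv.subtypeEquivRight
    intro θ
    constructor
    · exact fun h => h.2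
    · exact fun h => ⟨surj_of_ne_one p θ _ (h ⟨0, hk⟩), h⟩
  have hcount : (p : ℤ) * Nat.card {θ : PresentedGroup (sigRels γ k p) →*
        Multiplicative (ZMod p) // ∀ i : Fin k, θ (PresentedGroup.of (Sum.inr i)) ≠ 1}
      = (p : ℤ) ^ (2 * γ) * (((p : ℤ) - 1) ^ k + (-1) ^ k * ((p : ℤ) - 1)) := by
    rw [Nat.card_congr (homEquiv p γ k), Nat.card_prod]
    have h1 : Nat.card ((Fin γ ⊕ Fin γ) → ZMod p) = p ^ (2 * γ) := by
      rw [Nat.card_fun, Nat.card_eq_fintype_card (α := ZMod p)]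
      · haveI : NeZero p := ⟨hp.ne_zero⟩
        rw [ZMod.card]
        congr 1
        simp [Nat.card_eq_fintype_card, two_mul]
    have hS := SS_card p k hk
    push_cast [h1]
    linear_combination ((p:ℤ)) ^ (2 * γ) * hS
  have hsecond : (p : ℤ) * Nat.card {θ : PresentedGroup (sigRels γ k p) →*
        Multiplicative (ZMod p) //
        Function.Surjective θ ∧ ∀ i : Fin k, θ (PresentedGroup.of (Sum.inr i)) ≠ 1}
      = (p : ℤ) ^ (2 * γ) * ((p : ℤ) - 1) * (((p : ℤ) - 1) ^ (k - 1) + (-1) ^ k) := by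
    rw [hdrop, hcount]
    have : k - 1 = m := rfl
    rw [this]
    show (p:ℤ) ^ (2*γ) * (((p:ℤ)-1) ^ (m+1) + (-1) ^ (m+1) * ((p:ℤ)-1)) = _
    ring
  refine ⟨?_, hsecond⟩
  have hbij := main_bij γ k p hk
  have hcast : ((Nat.card {θ : PresentedGroup (sigRels γ k p) →* Multiplicative (ZMod p) //
        Function.Surjective θ ∧ ∀ i : Fin k, θ (PresentedGroup.of (Sum.inr i)) ≠ 1} : ℕ) : ℤ)
      = (Nat.card {N : Subgroup (PresentedGroup (sigRels γ k p)) //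
        N.Normal ∧ N.index = p ∧ ∀ i : Fin k, PresentedGroup.of (Sum.inr i) ∉ N} : ℤ)
        * ((p : ℤ) - 1) := by
    rw [hbij]
    push_cast [Nat.cast_sub hp1]
    ring
  have hpm1 : ((p : ℤ) - 1) ≠ 0 := by
    have : (2 : ℤ) ≤ p := by exact_mod_cast hp.two_le
    omega
  apply mul_left_cancel₀ hpm1
  calc ((p:ℤ) - 1) * ((p:ℤ) * Nat.card {N : Subgroup (PresentedGroup (sigRels γ k p)) //
        N.Normal ∧ N.index = p ∧ ∀ i : Fin k, PresentedGroup.of (Sum.inr i) ∉ N})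
      = (p:ℤ) * (Nat.card {N : Subgroup (PresentedGroup (sigRels γ k p)) //
        N.Normal ∧ N.index = p ∧ ∀ i : Fin k, PresentedGroup.of (Sum.inr i) ∉ N} * ((p:ℤ)-1)) := by
        ring
    _ = (p:ℤ) * Nat.card {θ : PresentedGroup (sigRels γ k p) →* Multiplicative (ZMod p) //
        Function.Surjective θ ∧ ∀ i : Fin k, θ (PresentedGroup.of (Sum.inr i)) ≠ 1} := by
        rw [← hcast]
    _ = (p:ℤ) ^ (2*γ) * ((p:ℤ)-1) * (((p:ℤ)-1) ^ (k-1) + (-1)^k) := hsecond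
    _ = ((p:ℤ) - 1) * ((p:ℤ) ^ (2*γ) * (((p:ℤ)-1) ^ (k-1) + (-1)^k)) := by ring

end Main

/-- The number of normal subgroups `N` of index `p` of
`Γ = ⟨A_j, B_j, X_i | ∏ [A_j,B_j] · X_1 ⋯ X_k, X_i^p⟩` avoiding all the `X_i` is
`p^{2γ−1}·((p−1)^{k−1} + (−1)^k)`; equivalently, the number of surjective homomorphisms
`θ : Γ → ZMod p` with `θ(X_i) ≠ 0` for all `i` is `p^{2γ−1}·(p−1)·((p−1)^{k−1} + (−1)^k)`.
(Both identities are stated multiplied through by `p`, so that they make sense for `γ = 0`.) -/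
theorem stmt_9 (γ k p : ℕ) (hk : 1 ≤ k) (hp : p.Prime) :
    (p : ℤ) * Nat.card {N : Subgroup (PresentedGroup (sigRels γ k p)) //
        N.Normal ∧ N.index = p ∧ ∀ i : Fin k, PresentedGroup.of (Sum.inr i) ∉ N}
      = (p : ℤ) ^ (2 * γ) * (((p : ℤ) - 1) ^ (k - 1) + (-1) ^ k) ∧
    (p : ℤ) * Nat.card {θ : PresentedGroup (sigRels γ k p) →* Multiplicative (ZMod p) //
        Function.Surjective θ ∧ ∀ i : Fin k, θ (PresentedGroup.of (Sum.inr i)) ≠ 1}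
      = (p : ℤ) ^ (2 * γ) * ((p : ℤ) - 1) * (((p : ℤ) - 1) ^ (k - 1) + (-1) ^ k) := by
  haveI : Fact p.Prime := ⟨hp⟩
  exact stmt_9' γ k p hk hp
end

section
/- Let p be an odd prime and r a divisor of p − 1, and let G_{p,r} = ⟨a, b | a^p = b^r = 1, b a b⁻¹ = a^ω⟩ where ω is an integer whose residue is a primitive r-th root of unity modulo p. Then the number of conjugacy classes of G_{p,r} equals r + (p − 1)/r. -/
open Multiplicative SemidirectProduct

section aux

variable {p r : ℕ} [Fact p.Prime] [NeZero r]
  (ω : (ZMod p)ˣ)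
  (φ : Multiplicative (ZMod r) →* MulAut (Multiplicative (ZMod p)))
  (hω : orderOf ω = r)
  (hφ : ∀ x : ZMod p,
    (φ (Multiplicative.ofAdd (1 : ZMod r))) (Multiplicative.ofAdd x)
      = Multiplicative.ofAdd ((ω : ZMod p) * x))

include hφ in
lemma aux_act (x : ZMod r) (y : ZMod p) :
    (φ (ofAdd x)) (ofAdd y) = ofAdd ((ω : ZMod p) ^ x.val * y) := by
  have key : ∀ (n : ℕ) (y : ZMod p),
      (φ (ofAdd ((n : ZMod r)))) (ofAdd y) = ofAdd ((ω : ZMod p) ^ n * y) := by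
    intro n
    induction n with
    | zero => intro y; simp
    | succ n ih =>
      intro y
      have : ((n + 1 : ℕ) : ZMod r) = (n : ZMod r) + 1 := by push_cast; ring
      rw [this, ofAdd_add, map_mul, MulAut.mul_apply, hφ, ih]
      congr 1
      ring
  have hx : ((x.val : ℕ) : ZMod r) = x := by
    rw [ZMod.natCast_val, ZMod.cast_id]
  conv_lhs => rw [← hx]
  exact key x.val y

include hφ in
lemma aux_semiconj (n m : ZMod p) (h k : ZMod r) :
    (⟨ofAdd n, ofAdd h⟩ : Multiplicative (ZMod p) ⋊[φ] Multiplicative (ZMod r)) *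
      ⟨ofAdd m, ofAdd k⟩ =
    (⟨ofAdd ((ω : ZMod p) ^ h.val * m + (1 - (ω : ZMod p) ^ k.val) * n), ofAdd k⟩ :
      Multiplicative (ZMod p) ⋊[φ] Multiplicative (ZMod r)) * ⟨ofAdd n, ofAdd h⟩ := by
  ext
  · show ofAdd n * (φ (ofAdd h)) (ofAdd m) = _ * (φ (ofAdd k)) (ofAdd n)
    rw [aux_act ω φ hφ, aux_act ω φ hφ, ← ofAdd_add, ← ofAdd_add]
    congr 1
    ring
  · show ofAdd h * ofAdd k = ofAdd k * ofAdd h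
    rw [mul_comm]

include hφ in
lemma aux_conj (n m : ZMod p) (h k : ZMod r) :
    (⟨ofAdd n, ofAdd h⟩ : Multiplicative (ZMod p) ⋊[φ] Multiplicative (ZMod r)) *
      ⟨ofAdd m, ofAdd k⟩ * (⟨ofAdd n, ofAdd h⟩ :
        Multiplicative (ZMod p) ⋊[φ] Multiplicative (ZMod r))⁻¹ =
    ⟨ofAdd ((ω : ZMod p) ^ h.val * m + (1 - (ω : ZMod p) ^ k.val) * n), ofAdd k⟩ := by
  rw [aux_semiconj ω φ hφ, mul_inv_cancel_right]

lemma aux_mk_inj {x y : ZMod p} {u v : ZMod r} (h1 : x = y) (h2 : u = v) :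
    (⟨ofAdd x, ofAdd u⟩ : Multiplicative (ZMod p) ⋊[φ] Multiplicative (ZMod r))
      = ⟨ofAdd y, ofAdd v⟩ := by
  subst h1; subst h2; rfl

include hω in
lemma aux_nz {k : ZMod r} (hk : k ≠ 0) : (1 : ZMod p) - (ω : ZMod p) ^ k.val ≠ 0 := by
  intro h
  have h1 : (ω : ZMod p) ^ k.val = 1 := by linear_combination -h
  have h2 : (ω ^ k.val : (ZMod p)ˣ) = 1 := by
    ext
    simpa using h1
  have h3 : orderOf ω ∣ k.val := orderOf_dvd_of_pow_eq_one h2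
  rw [hω] at h3
  have h4 : k.val < r := ZMod.val_lt k
  have h5 : k.val = 0 := Nat.eq_zero_of_dvd_of_lt h3 h4
  apply hk
  have := ZMod.natCast_val (R := ZMod r) k
  rw [ZMod.cast_id] at this
  rw [← this, h5, Nat.cast_zero]

include hω hφ in
set_option maxHeartbeats 1000000 in
lemma aux_equiv : Nonempty (ConjClasses (Multiplicative (ZMod p) ⋊[φ] Multiplicative (ZMod r)) ≃
    (Option ((ZMod p)ˣ ⧸ Subgroup.zpowers ω) ⊕ {k : ZMod r // k ≠ 0})) := by
  classical
  set G := Multiplicative (ZMod p) ⋊[φ] Multiplicative (ZMod r) with hG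
  set T := Option ((ZMod p)ˣ ⧸ Subgroup.zpowers ω) ⊕ {k : ZMod r // k ≠ 0} with hT
  set Φ : G → T := fun g =>
    if hk : toAdd g.right = 0 then
      if hm : toAdd g.left = 0 then Sum.inl none
      else Sum.inl (some (QuotientGroup.mk (Units.mk0 (toAdd g.left) hm)))
    else Sum.inr ⟨toAdd g.right, hk⟩ with hΦ
  have hΦa : ∀ (g : G) (h : toAdd g.right = 0) (h2 : toAdd g.left = 0),
      Φ g = Sum.inl none := by
    intro g h h2
    simp only [hΦ]
    rw [dif_pos h, dif_pos h2]
  have hΦb : ∀ (g : G) (h : toAdd g.right = 0) (h2 : toAdd g.left ≠ 0),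
      Φ g = Sum.inl (some (QuotientGroup.mk (Units.mk0 (toAdd g.left) h2))) := by
    intro g h h2
    simp only [hΦ]
    rw [dif_pos h, dif_neg h2]
  have hΦc : ∀ (g : G) (h : toAdd g.right ≠ 0),
      Φ g = Sum.inr ⟨toAdd g.right, h⟩ := by
    intro g h
    simp only [hΦ]
    rw [dif_neg h]
  have hmul : ∀ (j : ℕ) (u : (ZMod p)ˣ),
      (QuotientGroup.mk (ω ^ j * u) : (ZMod p)ˣ ⧸ Subgroup.zpowers ω) = QuotientGroup.mk u := by
    intro j u
    rw [QuotientGroup.mk_mul,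
      (QuotientGroup.eq_one_iff _).mpr (pow_mem (Subgroup.mem_zpowers ω) j)]
    exact one_mul (QuotientGroup.mk u : (ZMod p)ˣ ⧸ Subgroup.zpowers ω)
  have hΦconst : ∀ a b : G, IsConj a b → Φ a = Φ b := by
    intro a b hab
    obtain ⟨c, hc⟩ := isConj_iff.mp hab
    have hb : b = (⟨ofAdd ((ω : ZMod p) ^ (toAdd c.right).val * toAdd a.left +
        (1 - (ω : ZMod p) ^ (toAdd a.right).val) * toAdd c.left), ofAdd (toAdd a.right)⟩ : G) := by
      rw [← hc]
      exact aux_conj ω φ hφ (toAdd c.left) (toAdd a.left) (toAdd c.right) (toAdd a.right)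
    have hbr : toAdd b.right = toAdd a.right := by rw [hb]; rfl
    have hbl : toAdd b.left = (ω : ZMod p) ^ (toAdd c.right).val * toAdd a.left +
        (1 - (ω : ZMod p) ^ (toAdd a.right).val) * toAdd c.left := by rw [hb]; rfl
    by_cases hk : toAdd a.right = 0
    · have hval0 : (toAdd a.right).val = 0 := by rw [hk, ZMod.val_zero]
      by_cases hm : toAdd a.left = 0
      · rw [hΦa a hk hm, hΦa b (by rw [hbr]; exact hk)
          (by rw [hbl, hval0, hm]; ring)]
      · have hm' : toAdd b.left ≠ 0 := by
          rw [hbl, hval0]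
          have h9 : (ω : ZMod p) ^ (toAdd c.right).val * toAdd a.left ≠ 0 :=
            mul_ne_zero (pow_ne_zero _ (Units.ne_zero ω)) hm
          simpa using h9
        rw [hΦb a hk hm, hΦb b (by rw [hbr]; exact hk) hm']
        have hmk : Units.mk0 (toAdd b.left) hm'
            = ω ^ (toAdd c.right).val * Units.mk0 (toAdd a.left) hm := by
          ext
          simp only [Units.val_mk0, Units.val_mul, Units.val_pow_eq_pow_val]
          rw [hbl, hval0]
          ring
        rw [hmk, hmul]
    · rw [hΦc a hk, hΦc b (by rw [hbr]; exact hk)]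
      exact congrArg Sum.inr (Subtype.ext hbr.symm)
  let F : ConjClasses G → T := Quotient.lift Φ hΦconst
  have hF : ∀ a : G, F (ConjClasses.mk a) = Φ a := fun _ => rfl
  have hGmk : ∀ a : G, a = (⟨ofAdd (toAdd a.left), ofAdd (toAdd a.right)⟩ : G) := fun _ => rfl
  have hfin : IsOfFinOrder ω :=
    orderOf_pos_iff.mp (by rw [hω]; exact Nat.pos_of_ne_zero (NeZero.ne r))
  have hinj : Function.Injective F := by
    intro x y hxy
    obtain ⟨a, rfl⟩ := ConjClasses.mk_surjective x
    obtain ⟨b, rfl⟩ := ConjClasses.mk_surjective y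
    rw [hF, hF] at hxy
    rw [ConjClasses.mk_eq_mk_iff_isConj]
    by_cases hka : toAdd a.right = 0 <;> by_cases hkb : toAdd b.right = 0
    · by_cases hma : toAdd a.left = 0 <;> by_cases hmb : toAdd b.left = 0
      · have : a = b := by rw [hGmk a, hGmk b, hka, hkb, hma, hmb]
        rw [this]
      · rw [hΦa a hka hma, hΦb b hkb hmb] at hxy
        cases hxy
      · rw [hΦb a hka hma, hΦa b hkb hmb] at hxy
        cases hxy
      · rw [hΦb a hka hma, hΦb b hkb hmb] at hxy
        have hxy2 := Option.some.inj (Sum.inl.inj hxy)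
        rw [QuotientGroup.eq] at hxy2
        replace hxy := hxy2
        obtain ⟨j, hj⟩ := (Submonoid.mem_powers_iff _ _).mp
          (hfin.mem_powers_iff_mem_zpowers.mpr hxy)
        have hjb : Units.mk0 (toAdd b.left) hmb = ω ^ j * Units.mk0 (toAdd a.left) hma := by
          rw [hj, mul_comm, mul_inv_cancel_left]
        have hval : toAdd b.left = (ω : ZMod p) ^ j * toAdd a.left := by
          have := congrArg Units.val hjb
          simpa using this
        have hpow : (ω : ZMod p) ^ (((j : ℕ) : ZMod r)).val = (ω : ZMod p) ^ j := by
          have h2 : ω ^ (((j : ℕ) : ZMod r)).val = ω ^ j := by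
            rw [ZMod.val_natCast, ← hω, pow_mod_orderOf]
          calc (ω : ZMod p) ^ (((j : ℕ) : ZMod r)).val
              = ((ω ^ (((j : ℕ) : ZMod r)).val : (ZMod p)ˣ) : ZMod p) := by simp
            _ = ((ω ^ j : (ZMod p)ˣ) : ZMod p) := by rw [h2]
            _ = (ω : ZMod p) ^ j := by simp
        rw [hGmk a, hGmk b, hka, hkb]
        rw [isConj_iff]
        refine ⟨(⟨ofAdd 0, ofAdd ((j : ℕ) : ZMod r)⟩ : G), ?_⟩
        rw [aux_conj ω φ hφ]
        refine aux_mk_inj φ ?_ rfl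
        rw [hpow, hval]
        ring
    · by_cases hma : toAdd a.left = 0
      · rw [hΦa a hka hma, hΦc b hkb] at hxy
        cases hxy
      · rw [hΦb a hka hma, hΦc b hkb] at hxy
        cases hxy
    · by_cases hmb : toAdd b.left = 0
      · rw [hΦc a hka, hΦa b hkb hmb] at hxy
        cases hxy
      · rw [hΦc a hka, hΦb b hkb hmb] at hxy
        cases hxy
    · rw [hΦc a hka, hΦc b hkb] at hxy
      replace hxy := Subtype.mk.inj (Sum.inr.inj hxy)
      have hnz := aux_nz ω hω (k := toAdd a.right) hka
      rw [hGmk a, hGmk b, ← hxy]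
      rw [isConj_iff]
      refine ⟨(⟨ofAdd ((1 - (ω : ZMod p) ^ (toAdd a.right).val)⁻¹ *
        (toAdd b.left - toAdd a.left)), ofAdd (0 : ZMod r)⟩ : G), ?_⟩
      rw [aux_conj ω φ hφ]
      refine aux_mk_inj φ ?_ rfl
      rw [ZMod.val_zero, pow_zero, one_mul, mul_inv_cancel_left₀ hnz]
      ring
  have hsurj : Function.Surjective F := by
    rintro ((_ | q) | ⟨k, hk⟩)
    · refine ⟨ConjClasses.mk 1, ?_⟩
      rw [hF, hΦa 1 (by simp) (by simp)]
    · obtain ⟨u, rfl⟩ := QuotientGroup.mk_surjective q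
      refine ⟨ConjClasses.mk (⟨ofAdd ((u : ZMod p)), ofAdd (0 : ZMod r)⟩ : G), ?_⟩
      rw [hF]
      rw [hΦb (⟨ofAdd ((u : ZMod p)), ofAdd (0 : ZMod r)⟩ : G) (by simp)
        (by simpa using Units.ne_zero u)]
      exact congrArg (fun v : (ZMod p)ˣ =>
        (Sum.inl (some (QuotientGroup.mk v)) : T)) (Units.ext rfl)
    · refine ⟨ConjClasses.mk (⟨ofAdd (0 : ZMod p), ofAdd k⟩ : G), ?_⟩
      rw [hF]
      rw [hΦc (⟨ofAdd (0 : ZMod p), ofAdd k⟩ : G) (by simpa using hk)]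
      exact congrArg Sum.inr (Subtype.ext rfl)
  exact ⟨Equiv.ofBijective F ⟨hinj, hsurj⟩⟩

include hω hφ in
lemma aux_card (hr : r ∣ p - 1) :
    Nat.card (ConjClasses (Multiplicative (ZMod p) ⋊[φ] Multiplicative (ZMod r)))
      = r + (p - 1) / r := by
  classical
  obtain ⟨e⟩ := aux_equiv ω φ hω hφ
  rw [Nat.card_congr e]
  haveI : Finite ((ZMod p)ˣ ⧸ Subgroup.zpowers ω) := Quotient.finite _
  rw [Nat.card_sum, Finite.card_option]
  have hrpos : 0 < r := Nat.pos_of_ne_zero (NeZero.ne r)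
  have hcardU : Nat.card (ZMod p)ˣ = p - 1 := by
    rw [Nat.card_eq_fintype_card, ZMod.card_units_eq_totient,
      Nat.totient_prime (Fact.out : p.Prime)]
  have hq := Subgroup.card_eq_card_quotient_mul_card_subgroup (Subgroup.zpowers ω)
  rw [Nat.card_zpowers, hω, hcardU] at hq
  have hQ : Nat.card ((ZMod p)ˣ ⧸ Subgroup.zpowers ω) = (p - 1) / r := by
    rw [hq, Nat.mul_div_cancel _ hrpos]
  have hsub : Nat.card {k : ZMod r // k ≠ 0} = r - 1 := by
    rw [Nat.card_eq_fintype_card, Fintype.card_subtype_compl, ZMod.card,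
      Fintype.card_subtype_eq]
  rw [hQ, hsub]
  omega

end aux

/-- The group `G_{p,r} = (ZMod p) ⋊ (ZMod r)`, where the generator of `ZMod r` acts on the
additive group `ZMod p` by multiplication by a unit `ω` of multiplicative order `r`, has
exactly `r + (p − 1)/r` conjugacy classes. -/
theorem stmt_11 (p r : ℕ) (hp : p.Prime) (hodd : Odd p) (hr : r ∣ p - 1)
    (ω : (ZMod p)ˣ) (hω : orderOf ω = r)
    (φ : Multiplicative (ZMod r) →* MulAut (Multiplicative (ZMod p)))
    (hφ : ∀ x : ZMod p,
      (φ (Multiplicative.ofAdd (1 : ZMod r))) (Multiplicative.ofAdd x)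
        = Multiplicative.ofAdd ((ω : ZMod p) * x)) :
    Nat.card (ConjClasses (Multiplicative (ZMod p) ⋊[φ] Multiplicative (ZMod r)))
      = r + (p - 1) / r := by
  haveI : Fact p.Prime := ⟨hp⟩
  haveI : NeZero p := ⟨hp.ne_zero⟩
  haveI : NeZero r := ⟨by
    have := orderOf_pos ω
    omega⟩
  exact aux_card ω φ hω hφ hr
end

section
/- Let p be an odd prime and let AGL₁(p) denote the group of affine transformations x ↦ c·x + d (c ∈ (ZMod p)ˣ, d ∈ ZMod p) of ZMod p, i.e. the semidirect product (ZMod p) ⋊ (ZMod p)ˣ with the natural multiplication action. Then for every divisor r of p − 1, AGL₁(p) has exactly one subgroup of order p·r; that is, any two subgroups of AGL₁(p) of order p·r are equal. -/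
open Subgroup

/-- In a finite cyclic group, every subgroup is the kernel of the `d`-th power map,
where `d` is its cardinality. -/
lemma aux_cyclic_eq_ker_pow {α : Type*} [CommGroup α] [Fintype α] [IsCyclic α]
    (K : Subgroup α) : K = (powMonoidHom (Nat.card K)).ker := by
  classical
  set d := Nat.card K with hd
  have hd0 : 0 < d := Nat.card_pos
  have hle : K ≤ (powMonoidHom d).ker := by
    intro x hx
    have h1 : (⟨x, hx⟩ : K) ^ d = 1 := by
      rw [hd]; exact pow_card_eq_one'
    have := congrArg (Subgroup.subtype K) h1
    simpa [MonoidHom.mem_ker, powMonoidHom] using this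
  refine (Subgroup.eq_of_le_of_card_ge hle ?_)
  have h1 := IsCyclic.card_pow_eq_one_le (α := α) hd0
  have h2 : Nat.card ((powMonoidHom d).ker : Subgroup α) =
      (((powMonoidHom d : α →* α).ker : Subgroup α) : Set α).toFinset.card := by
    rw [Set.toFinset_card, Nat.card_eq_fintype_card]
    exact Fintype.card_congr (Equiv.refl _)
  refine h2.trans_le (le_trans (Finset.card_le_card ?_) h1)
  intro x hx
  simp only [Set.mem_toFinset, SetLike.mem_coe, MonoidHom.mem_ker, powMonoidHom_apply] at hx
  simp [hx]

/-- A finite cyclic group has a subgroup of every order dividing the group order. -/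
lemma aux_cyclic_exists_subgroup {α : Type*} [Group α] [Finite α] [IsCyclic α] {r : ℕ}
    (hr0 : 0 < r) (hr : r ∣ Nat.card α) : ∃ K : Subgroup α, Nat.card K = r := by
  obtain ⟨g, hg⟩ := IsCyclic.exists_ofOrder_eq_natCard (α := α)
  set n := Nat.card α with hn
  have hn0 : 0 < n := Nat.card_pos
  refine ⟨Subgroup.zpowers (g ^ (n / r)), ?_⟩
  rw [Nat.card_zpowers, orderOf_pow, hg]
  have hdvd : n / r ∣ n := Nat.div_dvd_of_dvd hr
  rw [Nat.gcd_eq_right hdvd, Nat.div_div_self hr hn0.ne']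

/-- The affine group `AGL₁(p) = (ZMod p) ⋊ (ZMod p)ˣ` (with the natural multiplication
action) has exactly one subgroup of order `p·r` for each divisor `r` of `p − 1`. -/
theorem stmt_14 (p : ℕ) (hp : p.Prime) (hodd : Odd p)
    (φ : (ZMod p)ˣ →* MulAut (Multiplicative (ZMod p)))
    (hφ : ∀ (c : (ZMod p)ˣ) (x : ZMod p),
      (φ c) (Multiplicative.ofAdd x) = Multiplicative.ofAdd ((c : ZMod p) * x))
    (r : ℕ) (hr : r ∣ p - 1) :
    ∃! H : Subgroup (Multiplicative (ZMod p) ⋊[φ] (ZMod p)ˣ), Nat.card H = p * r := by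
  haveI : Fact p.Prime := ⟨hp⟩
  haveI : NeZero p := ⟨hp.pos.ne'⟩
  have hp2 := hp.two_le
  have hp1 : 0 < p - 1 := by omega
  have hr0 : 0 < r := Nat.pos_of_dvd_of_pos hr hp1
  set G := Multiplicative (ZMod p) ⋊[φ] (ZMod p)ˣ with hGdef
  set π : G →* (ZMod p)ˣ := SemidirectProduct.rightHom with hπ
  have e : G ≃ (Multiplicative (ZMod p)) × (ZMod p)ˣ :=
    ⟨fun x => (x.left, x.right), fun y => ⟨y.1, y.2⟩, fun x => rfl, fun y => rfl⟩
  haveI : Finite G := Finite.of_equiv _ e.symm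
  have hMcard : Nat.card (Multiplicative (ZMod p)) = p := by
    rw [Nat.card_congr Multiplicative.toAdd, Nat.card_zmod]
  have hcardU : Nat.card (ZMod p)ˣ = p - 1 := by
    rw [Nat.card_eq_fintype_card, ZMod.card_units_eq_totient, Nat.totient_prime hp]
  have hG : Nat.card G = p * (p - 1) := by
    rw [Nat.card_congr e, Nat.card_prod, hMcard, hcardU]
  have hkerCard : Nat.card π.ker = p := by
    rw [← SemidirectProduct.range_inl_eq_ker_rightHom,
      Nat.card_congr (MonoidHom.ofInjective SemidirectProduct.inl_injective).toEquiv.symm, hMcard]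
  -- cardinality of preimages
  have hcomap : ∀ K : Subgroup (ZMod p)ˣ, Nat.card (K.comap π) = p * Nat.card K := by
    intro K
    have h1 : (K.comap π).index = K.index :=
      K.index_comap_of_surjective SemidirectProduct.rightHom_surjective
    have h2 := Subgroup.card_mul_index (K.comap π)
    have h3 := Subgroup.card_mul_index K
    rw [hG] at h2
    rw [hcardU] at h3
    have hKpos : 0 < K.index := Nat.pos_of_ne_zero (Subgroup.index_ne_zero_of_finite)
    refine Nat.eq_of_mul_eq_mul_right hKpos ?_
    rw [← h1] at h3 ⊢
    rw [h2, mul_assoc, h3]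
  -- the kernel is contained in every subgroup of order p * r
  have hker_le : ∀ H : Subgroup G, Nat.card H = p * r → π.ker ≤ H := by
    intro H hH
    obtain ⟨g, hg⟩ := exists_prime_orderOf_dvd_card' (G := H) p
      (by rw [hH]; exact dvd_mul_right p r)
    have hgG : orderOf (g : G) = p := by rw [Subgroup.orderOf_coe, hg]
    have hπg : π (g : G) = 1 := by
      have h1 : orderOf (π (g : G)) ∣ p := by
        have := orderOf_map_dvd π (g : G); rwa [hgG] at this
      have h2 : orderOf (π (g : G)) ∣ p - 1 := hcardU ▸ orderOf_dvd_natCard _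
      have hco : Nat.Coprime p (p - 1) :=
        (Nat.coprime_self_sub_right (by omega)).mpr (Nat.coprime_one_right p)
      have : orderOf (π (g : G)) = 1 := Nat.dvd_one.mp (hco ▸ Nat.dvd_gcd h1 h2)
      exact orderOf_eq_one_iff.mp this
    have hzle : Subgroup.zpowers (g : G) ≤ π.ker := Subgroup.zpowers_le.2 hπg
    have hzeq : Subgroup.zpowers (g : G) = π.ker :=
      Subgroup.eq_of_le_of_card_ge hzle (by rw [hkerCard, Nat.card_zpowers, hgG])
    rw [← hzeq]
    exact Subgroup.zpowers_le.2 g.2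
  obtain ⟨K0, hK0⟩ := aux_cyclic_exists_subgroup (α := (ZMod p)ˣ) hr0 (by rw [hcardU]; exact hr)
  refine ⟨K0.comap π, ?_, ?_⟩
  · show Nat.card (K0.comap π) = p * r
    rw [hcomap, hK0]
  intro H hH
  have hkle := hker_le H hH
  have hmap : H = (H.map π).comap π := by
    rw [Subgroup.comap_map_eq, sup_eq_left.2 hkle]
  have hcm : Nat.card (H.map π) = r := by
    have h := hcomap (H.map π)
    rw [← hmap, hH] at h
    exact (Nat.eq_of_mul_eq_mul_left hp.pos h).symm
  have hKeq : H.map π = K0 := by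
    have e1 := aux_cyclic_eq_ker_pow (H.map π)
    have e2 := aux_cyclic_eq_ker_pow K0
    rw [hcm] at e1
    rw [hK0] at e2
    rw [e1, e2]
  rw [hmap, hKeq]
end

section
/- Let p be a prime with p ≡ 1 (mod 3), and let G = G_{p,6} × C₂, a group of order 12p. Then G contains elements x of order 2 and y of order 6 such that the product x·y has order 6 and x and y together generate G. (This exhibits G as a quotient of the von Dyck triangle group of type (2,6,6), as required for the chiral maps of type {6,6} and genus p + 1 in the paper's classification.) -/
open Multiplicative Finset

section Aux

variable {p : ℕ} (ω : (ZMod p)ˣ)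
  (φ : Multiplicative (ZMod 6) →* MulAut (Multiplicative (ZMod p)))
  (hφ : ∀ x : ZMod p, (φ (ofAdd (1 : ZMod 6))) (ofAdd x) = ofAdd ((ω : ZMod p) * x))

theorem prod_pow_mk' {A B : Type*} [Monoid A] [Monoid B] (n : ℕ) (a : A) (b : B) :
    (a, b) ^ n = (a ^ n, b ^ n) := by
  induction n with
  | zero => simp; rfl
  | succ n ih => rw [pow_succ, ih, Prod.mk_mul_mk, ← pow_succ, ← pow_succ]

include hφ

lemma aux_phi_pow (n : ℕ) (t : ZMod p) :
    φ (ofAdd ((n : ZMod 6))) (ofAdd t) = ofAdd ((ω : ZMod p) ^ n * t) := by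
  induction n generalizing t with
  | zero => simp
  | succ n ih =>
      have h1 : ((n + 1 : ℕ) : ZMod 6) = (1 : ZMod 6) + (n : ZMod 6) := by push_cast; ring
      rw [h1, ofAdd_add, map_mul, MulAut.mul_apply, ih, hφ]
      congr 1
      rw [pow_succ]
      ring

lemma aux_pow (c n : ℕ) (t : ZMod p) :
    (⟨ofAdd t, ofAdd ((c : ZMod 6))⟩ :
        Multiplicative (ZMod p) ⋊[φ] Multiplicative (ZMod 6)) ^ n
      = ⟨ofAdd ((∑ i ∈ range n, ((ω : ZMod p) ^ c) ^ i) * t),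
          ofAdd (((n * c : ℕ) : ZMod 6))⟩ := by
  induction n with
  | zero => ext <;> simp
  | succ n ih =>
      rw [pow_succ, ih]
      ext : 1
      · rw [SemidirectProduct.mul_left]
        show (ofAdd _) * φ (ofAdd (((n * c : ℕ)) : ZMod 6)) (ofAdd t) = _
        rw [aux_phi_pow ω φ hφ, ← ofAdd_add]
        congr 1
        rw [sum_range_succ, pow_mul]
        ring
      · rw [SemidirectProduct.mul_right]
        show ofAdd _ * ofAdd ((c : ZMod 6)) = ofAdd _
        rw [← ofAdd_add]
        congr 1
        push_cast
        ring

end Aux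

/-- For a prime `p ≡ 1 (mod 3)`, the group `G = G_{p,6} × C₂` of order `12p` contains an
element `x` of order `2` and an element `y` of order `6` such that `x·y` has order `6` and
`x`, `y` generate `G`: i.e. `G` is a quotient of the von Dyck triangle group of type
`(2,6,6)`, as required for the chiral maps of type `{6,6}` and genus `p + 1`. -/
theorem stmt_18 (p : ℕ) (hp : p.Prime) (h3 : p % 3 = 1)
    (ω : (ZMod p)ˣ) (hω : orderOf ω = 6)
    (φ : Multiplicative (ZMod 6) →* MulAut (Multiplicative (ZMod p)))
    (hφ : ∀ x : ZMod p,
      (φ (Multiplicative.ofAdd (1 : ZMod 6))) (Multiplicative.ofAdd x)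
        = Multiplicative.ofAdd ((ω : ZMod p) * x)) :
    ∃ x y : (Multiplicative (ZMod p) ⋊[φ] Multiplicative (ZMod 6)) × Multiplicative (ZMod 2),
      orderOf x = 2 ∧ orderOf y = 6 ∧ orderOf (x * y) = 6 ∧
        Subgroup.closure {x, y} = ⊤ := by
  haveI : Fact p.Prime := ⟨hp⟩
  set S := Multiplicative (ZMod p) ⋊[φ] Multiplicative (ZMod 6) with hS
  set G := S × Multiplicative (ZMod 2) with hG
  -- basic facts about ω
  have hω6 : (ω : ZMod p) ^ 6 = 1 := by
    have h := pow_orderOf_eq_one ω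
    rw [hω] at h
    simpa [Units.val_pow_eq_pow_val] using congrArg Units.val h
  have hωne : ∀ c : ℕ, ¬ (6 ∣ c) → (ω : ZMod p) ^ c ≠ 1 := by
    intro c hc h
    apply hc
    rw [← hω]
    apply orderOf_dvd_of_pow_eq_one
    ext
    simpa [Units.val_pow_eq_pow_val] using h
  have hgeom : ∀ c : ℕ, ¬ (6 ∣ c) → ∑ i ∈ range 6, ((ω : ZMod p) ^ c) ^ i = 0 := by
    intro c hc
    rw [geom_sum_eq (hωne c hc), ← pow_mul, mul_comm, pow_mul, hω6, one_pow, sub_self, zero_div]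
  -- the elements
  set x : G := ((⟨ofAdd (0 : ZMod p), ofAdd ((3 : ℕ) : ZMod 6)⟩ : S), ofAdd (1 : ZMod 2))
    with hxdef
  set y : G := ((⟨ofAdd (1 : ZMod p), ofAdd ((1 : ℕ) : ZMod 6)⟩ : S),
    (1 : Multiplicative (ZMod 2))) with hydef
  -- power computations
  have hx2 : x ^ 2 = 1 := by
    rw [hxdef, prod_pow_mk', aux_pow ω φ hφ]
    have h1 : (((2 * 3 : ℕ)) : ZMod 6) = ((0 : ℕ) : ZMod 6) := by decide
    have h2 : (ofAdd (1 : ZMod 2)) ^ 2 = 1 := by decide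
    rw [h1, h2, mul_zero]
    rfl
  have hy6 : y ^ 6 = 1 := by
    rw [hydef, prod_pow_mk', aux_pow ω φ hφ, hgeom 1 (by norm_num), one_pow]
    have h1 : (((6 * 1 : ℕ)) : ZMod 6) = ((0 : ℕ) : ZMod 6) := by decide
    rw [h1, zero_mul]
    rfl
  have hxy : x * y = ((⟨ofAdd ((ω : ZMod p) ^ 3 * 1), ofAdd ((4 : ℕ) : ZMod 6)⟩ : S),
      ofAdd (1 : ZMod 2)) := by
    rw [hxdef, hydef, Prod.mk_mul_mk, mul_one]
    congr 1
    ext : 1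
    · rw [SemidirectProduct.mul_left]
      show ofAdd (0 : ZMod p) * φ (ofAdd ((3 : ℕ) : ZMod 6)) (ofAdd (1 : ZMod p)) = _
      rw [aux_phi_pow ω φ hφ, ← ofAdd_add, zero_add]
    · rw [SemidirectProduct.mul_right]
      show ofAdd ((3 : ℕ) : ZMod 6) * ofAdd ((1 : ℕ) : ZMod 6) = ofAdd ((4 : ℕ) : ZMod 6)
      decide
  have hz6 : (x * y) ^ 6 = 1 := by
    rw [hxy, prod_pow_mk', aux_pow ω φ hφ, hgeom 4 (by norm_num), zero_mul]
    have h1 : (((6 * 4 : ℕ)) : ZMod 6) = ((0 : ℕ) : ZMod 6) := by decide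
    have h2 : (ofAdd (1 : ZMod 2)) ^ 6 = 1 := by decide
    rw [h1, h2]
    rfl
  have hz2 : (x * y) ^ 2 ≠ 1 := by
    rw [hxy, prod_pow_mk', aux_pow ω φ hφ]
    intro h
    have h' : (ofAdd (((2 * 4 : ℕ)) : ZMod 6) : Multiplicative (ZMod 6)) = 1 :=
      congrArg (fun g => g.1.right) h
    revert h'
    decide
  have hz3 : (x * y) ^ 3 ≠ 1 := by
    rw [hxy, prod_pow_mk', aux_pow ω φ hφ]
    intro h
    have h' : (ofAdd (1 : ZMod 2) : Multiplicative (ZMod 2)) ^ 3 = 1 :=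
      congrArg Prod.snd h
    revert h'
    decide
  have hx1 : x ≠ 1 := by
    intro h
    have h' : (ofAdd (1 : ZMod 2) : Multiplicative (ZMod 2)) = 1 := congrArg Prod.snd h
    revert h'
    decide
  refine ⟨x, y, ?_, ?_, ?_, ?_⟩
  · exact orderOf_eq_prime hx2 hx1
  · have hdvd : orderOf y ∣ 6 := orderOf_dvd_of_pow_eq_one hy6
    have hdvd2 : (6 : ℕ) ∣ orderOf y := by
      have h := orderOf_map_dvd
        (SemidirectProduct.rightHom.comp (MonoidHom.fst S (Multiplicative (ZMod 2)))) y
      have hπy : (SemidirectProduct.rightHom.comp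
          (MonoidHom.fst S (Multiplicative (ZMod 2)))) y = ofAdd ((1 : ℕ) : ZMod 6) := rfl
      rw [hπy] at h
      have h6 : orderOf (ofAdd (((1 : ℕ)) : ZMod 6)) = 6 := by
        rw [orderOf_ofAdd_eq_addOrderOf]
        norm_num [ZMod.addOrderOf_one]
      rwa [h6] at h
    exact Nat.dvd_antisymm hdvd hdvd2
  · have hd : orderOf (x * y) ∣ 6 := orderOf_dvd_of_pow_eq_one hz6
    have hdiv6 : ∀ d : ℕ, d ∣ 6 → d = 1 ∨ d = 2 ∨ d = 3 ∨ d = 6 := by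
      intro d hd
      have h1 : d ≤ 6 := Nat.le_of_dvd (by norm_num) hd
      have h2 : 0 < d := Nat.pos_of_dvd_of_pos hd (by norm_num)
      interval_cases d <;> revert hd <;> decide
    rcases hdiv6 _ hd with h | h | h | h
    · exfalso
      apply hz2
      have := pow_orderOf_eq_one (x * y)
      rw [h, pow_one] at this
      rw [this, one_pow]
    · exfalso
      apply hz2
      have h2 := pow_orderOf_eq_one (x * y)
      rwa [h] at h2
    · exfalso
      apply hz3
      have h2 := pow_orderOf_eq_one (x * y)
      rwa [h] at h2
    · exact h
  · rw [Subgroup.eq_top_iff']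
    set H := Subgroup.closure ({x, y} : Set G) with hH
    have hxH : x ∈ H := Subgroup.subset_closure (by simp)
    have hyH : y ∈ H := Subgroup.subset_closure (by simp)
    set s3 : ZMod p := (∑ i ∈ range 3, ((ω : ZMod p) ^ 1) ^ i) * 1 with hs3
    have hy3 : y ^ 3 = ((⟨ofAdd s3, ofAdd ((3 * 1 : ℕ) : ZMod 6)⟩ : S),
        (1 : Multiplicative (ZMod 2))) := by
      rw [hydef, prod_pow_mk', aux_pow ω φ hφ, one_pow]
    have hu : x * y ^ 3 = ((⟨ofAdd ((ω : ZMod p) ^ 3 * s3), ofAdd ((0 : ℕ) : ZMod 6)⟩ : S),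
        ofAdd (1 : ZMod 2)) := by
      rw [hy3, hxdef, Prod.mk_mul_mk, mul_one]
      congr 1
      ext : 1
      · rw [SemidirectProduct.mul_left]
        show ofAdd (0 : ZMod p) * φ (ofAdd ((3 : ℕ) : ZMod 6)) (ofAdd s3) = _
        rw [aux_phi_pow ω φ hφ, ← ofAdd_add, zero_add]
      · rw [SemidirectProduct.mul_right]
        show ofAdd ((3 : ℕ) : ZMod 6) * ofAdd ((3 * 1 : ℕ) : ZMod 6) = ofAdd ((0 : ℕ) : ZMod 6)
        decide
    set c0 : ZMod p := 2 * ((ω : ZMod p) ^ 3 * s3) with hc0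
    have hu2 : (x * y ^ 3) ^ 2 = ((⟨ofAdd c0, ofAdd ((0 : ℕ) : ZMod 6)⟩ : S),
        (1 : Multiplicative (ZMod 2))) := by
      rw [hu, prod_pow_mk', aux_pow ω φ hφ]
      have h1 : (∑ i ∈ range 2, ((ω : ZMod p) ^ 0) ^ i) = 2 := by
        norm_num [Finset.sum_range_succ]
      have h2 : (ofAdd (1 : ZMod 2)) ^ 2 = 1 := by decide
      have h3' : (((2 * 0 : ℕ)) : ZMod 6) = ((0 : ℕ) : ZMod 6) := by decide
      rw [h1, h2, h3', hc0]
    have hc0ne : c0 ≠ 0 := by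
      have hp2 : p ≠ 2 := by rintro rfl; simp at h3
      have h2 : (2 : ZMod p) ≠ 0 := by
        intro h
        rw [show ((2 : ZMod p)) = ((2 : ℕ) : ZMod p) by push_cast; ring,
          ZMod.natCast_eq_zero_iff] at h
        exact hp2 ((Nat.prime_dvd_prime_iff_eq hp Nat.prime_two).mp h)
      have hω3 : (ω : ZMod p) ^ 3 ≠ 0 := pow_ne_zero _ (Units.ne_zero ω)
      have hωne1 : (ω : ZMod p) ≠ 1 := by
        have := hωne 1 (by norm_num); rwa [pow_one] at this
      have hs3ne : s3 ≠ 0 := by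
        rw [hs3, mul_one]
        simp only [pow_one]
        rw [geom_sum_eq hωne1]
        exact div_ne_zero (sub_ne_zero.mpr (hωne 3 (by norm_num))) (sub_ne_zero.mpr hωne1)
      exact mul_ne_zero h2 (mul_ne_zero hω3 hs3ne)
    have hu2H : ((⟨ofAdd c0, ofAdd ((0 : ℕ) : ZMod 6)⟩ : S),
        (1 : Multiplicative (ZMod 2))) ∈ H := by
      rw [← hu2]; exact pow_mem (mul_mem hxH (pow_mem hyH 3)) 2
    have memA : ∀ t : ZMod p,
        ((⟨ofAdd t, ofAdd ((0 : ℕ) : ZMod 6)⟩ : S), (1 : Multiplicative (ZMod 2))) ∈ H := by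
      intro t
      have hpw := prod_pow_mk' ((t / c0).val) (⟨ofAdd c0, ofAdd ((0 : ℕ) : ZMod 6)⟩ : S)
        (1 : Multiplicative (ZMod 2))
      rw [aux_pow ω φ hφ, one_pow] at hpw
      have hval : ((∑ i ∈ range (t / c0).val, ((ω : ZMod p) ^ 0) ^ i)) * c0 = t := by
        simp only [pow_zero, one_pow, Finset.sum_const, Finset.card_range, nsmul_eq_mul,
          mul_one]
        rw [ZMod.natCast_zmod_val, div_mul_cancel₀ _ hc0ne]
      have hz : (((t / c0).val * 0 : ℕ) : ZMod 6) = ((0 : ℕ) : ZMod 6) := by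
        rw [Nat.mul_zero]
      rw [hval, hz] at hpw
      rw [← hpw]
      exact pow_mem hu2H _
    have key : ∀ g : G, g.1.right = 1 → g.2 = 1 → g ∈ H := by
      rintro ⟨⟨l, r⟩, m2⟩ h1 h2
      have h1' : r = 1 := h1
      have h2' : m2 = 1 := h2
      subst h1'
      subst h2'
      simpa using memA (toAdd l)
    set π1 : G →* Multiplicative (ZMod 6) :=
      SemidirectProduct.rightHom.comp (MonoidHom.fst S (Multiplicative (ZMod 2))) with hπ1
    set π2 : G →* Multiplicative (ZMod 2) := MonoidHom.snd S (Multiplicative (ZMod 2)) with hπ2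
    intro g
    obtain ⟨⟨t, k⟩, m⟩ := g
    set w : G := y ^ (toAdd k - 3 * (((toAdd m).val : ℕ) : ZMod 6)).val * x ^ (toAdd m).val
      with hw
    have hwH : w ∈ H := mul_mem (pow_mem hyH _) (pow_mem hxH _)
    have hπ1w : π1 w = k := by
      rw [hw, map_mul, map_pow, map_pow]
      have e1 : π1 y = ofAdd ((1 : ℕ) : ZMod 6) := rfl
      have e2 : π1 x = ofAdd ((3 : ℕ) : ZMod 6) := rfl
      rw [e1, e2, ← ofAdd_nsmul, ← ofAdd_nsmul, ← ofAdd_add, nsmul_eq_mul, nsmul_eq_mul,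
        ZMod.natCast_zmod_val]
      conv_rhs => rw [← ofAdd_toAdd k]
      congr 1
      push_cast
      ring
    have hπ2w : π2 w = m := by
      rw [hw, map_mul, map_pow, map_pow]
      have e1 : π2 y = 1 := rfl
      have e2 : π2 x = ofAdd (1 : ZMod 2) := rfl
      rw [e1, e2, one_pow, one_mul, ← ofAdd_nsmul, nsmul_eq_mul, mul_one,
        ZMod.natCast_zmod_val, ofAdd_toAdd]
    have hmem : ((⟨t, k⟩, m) : G) * w⁻¹ ∈ H := by
      refine key _ ?_ ?_
      · show π1 (((⟨t, k⟩, m) : G) * w⁻¹) = 1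
        rw [map_mul, map_inv, hπ1w]
        have : π1 ((⟨t, k⟩, m) : G) = k := rfl
        rw [this, mul_inv_cancel]
      · show π2 (((⟨t, k⟩, m) : G) * w⁻¹) = 1
        rw [map_mul, map_inv, hπ2w]
        have : π2 ((⟨t, k⟩, m) : G) = m := rfl
        rw [this, mul_inv_cancel]
    have hfin : ((⟨t, k⟩, m) : G) = (((⟨t, k⟩, m) : G) * w⁻¹) * w := by
      rw [inv_mul_cancel_right]
    rw [hfin]
    exact mul_mem hmem hwH
end

section
/- Let p be a prime with p ≡ 1 (mod 5), and let G = G_{p,10}, a group of order 10p. Then G contains elements x of order 2 and y of order 5 such that the product x·y has order 10 and x and y together generate G. (This exhibits G as a quotient of the von Dyck triangle group of type (2,5,10), as required for the chiral maps of type {5,10} and genus p + 1 in the paper's classification.) -/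
open SemidirectProduct Multiplicative Finset


/-- For a prime `p ≡ 1 (mod 5)`, the group `G = G_{p,10}` of order `10p` contains an
element `x` of order `2` and an element `y` of order `5` such that `x·y` has order `10` and
`x`, `y` generate `G`: i.e. `G` is a quotient of the von Dyck triangle group of type
`(2,5,10)`, as required for the chiral maps of type `{5,10}` and genus `p + 1`. -/
theorem stmt_19 (p : ℕ) (hp : p.Prime) (h5 : p % 5 = 1)
    (ω : (ZMod p)ˣ) (hω : orderOf ω = 10)
    (φ : Multiplicative (ZMod 10) →* MulAut (Multiplicative (ZMod p)))
    (hφ : ∀ x : ZMod p,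
      (φ (Multiplicative.ofAdd (1 : ZMod 10))) (Multiplicative.ofAdd x)
        = Multiplicative.ofAdd ((ω : ZMod p) * x)) :
    ∃ x y : Multiplicative (ZMod p) ⋊[φ] Multiplicative (ZMod 10),
      orderOf x = 2 ∧ orderOf y = 5 ∧ orderOf (x * y) = 10 ∧
        Subgroup.closure {x, y} = ⊤ := by
  haveI : Fact p.Prime := ⟨hp⟩
  set c : ZMod p := (ω : ZMod p) with hc
  -- general action formula
  have hφ' : ∀ (n : ℕ) (x : ZMod p),
      (φ (ofAdd ((n : ZMod 10)))) (ofAdd x) = ofAdd (c ^ n * x) := by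
    intro n
    induction n with
    | zero => intro x; simp
    | succ n ih =>
      intro x
      have h1 : ((n + 1 : ℕ) : ZMod 10) = (1 : ZMod 10) + (n : ZMod 10) := by
        push_cast; ring
      rw [h1, ofAdd_add, map_mul, MulAut.mul_apply, ih, hφ]
      congr 1; ring
  -- basic facts about c
  have hωpow : ∀ k : ℕ, ω ^ k = 1 ↔ c ^ k = 1 := by
    intro k
    rw [hc, ← Units.val_pow_eq_pow_val, Units.val_eq_one]
  have hc10 : c ^ 10 = 1 := by
    rw [← hωpow]; rw [← hω]; exact pow_orderOf_eq_one ω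
  have hdvd : ∀ k : ℕ, c ^ k = 1 → 10 ∣ k := by
    intro k hk
    rw [← hωpow] at hk
    rw [← hω]; exact orderOf_dvd_of_pow_eq_one hk
  have hc1 : c ≠ 1 := by
    intro h
    have := hdvd 1 (by simpa using h); omega
  have hc5 : c ^ 5 = -1 := by
    have hsq : c ^ 5 * c ^ 5 = 1 := by rw [← pow_add]; exact hc10
    have h2 : (c ^ 5 - 1) * (c ^ 5 + 1) = 0 := by linear_combination hsq
    rcases mul_eq_zero.mp h2 with h | h
    · exact absurd (hdvd 5 (sub_eq_zero.mp h)) (by omega)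
    · linear_combination h
  have hcne : c ≠ -1 := by
    intro h
    have : c ^ 2 = 1 := by rw [h]; ring
    have := hdvd 2 this; omega
  have hc2ne : c ^ 2 ≠ -1 := by
    intro h
    have : c ^ 4 = 1 := by
      have : c ^ 4 = (c ^ 2) ^ 2 := by ring
      rw [this, h]; ring
    have := hdvd 4 this; omega
  have hc0 : c ≠ 0 := ω.ne_zero
  have ht : c + c ^ 2 + c ^ 3 + c ^ 4 ≠ 0 := by
    have hfac : c + c ^ 2 + c ^ 3 + c ^ 4 = c * (1 + c) * (1 + c ^ 2) := by ring
    rw [hfac]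
    refine mul_ne_zero (mul_ne_zero hc0 ?_) ?_
    · intro h; exact hcne (by linear_combination h)
    · intro h; exact hc2ne (by linear_combination h)
  -- the elements
  set G := Multiplicative (ZMod p) ⋊[φ] Multiplicative (ZMod 10)
  set x : G := ⟨ofAdd 1, ofAdd 5⟩ with hxdef
  set y : G := inr (ofAdd 6) with hydef
  have h5cast : (5 : ZMod 10) = ((5 : ℕ) : ZMod 10) := by norm_num
  -- orderOf x = 2
  have hx2 : x ^ 2 = 1 := by
    rw [pow_two]
    ext
    · show (ofAdd (1 : ZMod p)) * (φ (ofAdd 5)) (ofAdd 1) = (1 : G).left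
      rw [h5cast, hφ' 5 1, hc5, ← ofAdd_add]
      norm_num
    · show ofAdd (5 : ZMod 10) * ofAdd 5 = (1 : G).right
      rw [← ofAdd_add]
      show ofAdd ((5 : ZMod 10) + 5) = ofAdd 0
      norm_num
      decide
  have hxne : x ≠ 1 := by
    intro h
    have h2 : ofAdd (5 : ZMod 10) = (1 : Multiplicative (ZMod 10)) := by
      rw [hxdef] at h; exact congrArg SemidirectProduct.right h
    exact (by decide : ofAdd (5 : ZMod 10) ≠ 1) h2
  haveI : Fact (Nat.Prime 2) := ⟨by norm_num⟩
  haveI : Fact (Nat.Prime 5) := ⟨by norm_num⟩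
  have hxord : orderOf x = 2 := orderOf_eq_prime hx2 hxne
  -- orderOf y = 5
  have hyord : orderOf y = 5 := by
    apply orderOf_eq_prime
    · rw [hydef, ← map_pow]
      have h6 : (ofAdd (6 : ZMod 10)) ^ 5 = 1 := by
        rw [← ofAdd_nsmul]
        decide
      rw [h6, map_one]
    · rw [hydef]
      intro h
      exact (by decide : ofAdd (6 : ZMod 10) ≠ 1)
        (inr_injective (h.trans (map_one (inr : _ →* G)).symm))
  -- x * y = ⟨ofAdd 1, ofAdd 1⟩
  have hxy : x * y = (⟨ofAdd 1, ofAdd 1⟩ : G) := by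
    ext
    · show (ofAdd (1 : ZMod p)) * (φ (ofAdd 5)) (ofAdd 0) = ofAdd 1
      rw [h5cast, hφ' 5 0, mul_zero, ← ofAdd_add, add_zero]
    · show ofAdd (5 : ZMod 10) * ofAdd 6 = ofAdd 1
      rw [← ofAdd_add]; decide
  set z : G := ⟨ofAdd 1, ofAdd 1⟩ with hzdef
  -- powers of z
  have hzpow : ∀ n : ℕ, z ^ n = (⟨ofAdd (∑ i ∈ range n, c ^ i), ofAdd ((n : ZMod 10))⟩ : G) := by
    intro n
    induction n with
    | zero => ext <;> simp
    | succ n ih =>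
      rw [pow_succ, ih]
      ext
      · show ofAdd (∑ i ∈ range n, c ^ i) * (φ (ofAdd ((n : ZMod 10)))) (ofAdd 1) =
          ofAdd (∑ i ∈ range (n + 1), c ^ i)
        rw [hφ' n 1, mul_one, ← ofAdd_add, sum_range_succ]
      · show ofAdd ((n : ZMod 10)) * ofAdd 1 = ofAdd (((n + 1 : ℕ) : ZMod 10))
        rw [← ofAdd_add]
        push_cast
        rfl
  have hgeom : ∑ i ∈ range 10, c ^ i = 0 := by
    have h := geom_sum_mul c 10
    rw [hc10, sub_self] at h
    rcases mul_eq_zero.mp h with h | h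
    · exact h
    · exact absurd (sub_eq_zero.mp h) hc1
  have hz10 : z ^ 10 = 1 := by
    rw [hzpow 10, hgeom]
    ext
    · show ofAdd (0 : ZMod p) = ofAdd (0 : ZMod p)
      rfl
    · show ofAdd (((10 : ℕ) : ZMod 10)) = ofAdd (0 : ZMod 10)
      decide
  have hzne : ∀ m : ℕ, m < 10 → 0 < m → z ^ m ≠ 1 := by
    intro m hm hm0 h
    rw [hzpow m] at h
    have := congrArg SemidirectProduct.right h
    simp only [SemidirectProduct.one_right] at this
    have h2 : ((m : ℕ) : ZMod 10) = 0 := by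
      have := ofAdd.injective (this : ofAdd ((m : ZMod 10)) = ofAdd 0)
      exact this
    rw [ZMod.natCast_eq_zero_iff] at h2
    omega
  have hzord : orderOf z = 10 := by
    rw [orderOf_eq_iff (by norm_num)]
    exact ⟨hz10, fun m hm hm0 => hzne m hm hm0⟩
  refine ⟨x, y, hxord, hyord, by rw [hxy]; exact hzord, ?_⟩
  -- generation
  set H := Subgroup.closure ({x, y} : Set G) with hH
  have hxH : x ∈ H := Subgroup.subset_closure (by simp)
  have hyH : y ∈ H := Subgroup.subset_closure (by simp)
  have hzH : z ∈ H := by rw [← hxy]; exact mul_mem hxH hyH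
  -- the element w = z^5 * x = inl (ofAdd t), t ≠ 0
  set t : ZMod p := c + c ^ 2 + c ^ 3 + c ^ 4 with htdef
  have hw : z ^ 5 * x = (inl (ofAdd t) : G) := by
    rw [hzpow 5]
    ext
    · show ofAdd (∑ i ∈ range 5, c ^ i) * (φ (ofAdd (((5:ℕ) : ZMod 10)))) (ofAdd 1) =
        ofAdd t
      rw [hφ' 5 1, hc5, ← ofAdd_add]
      congr 1
      simp [Finset.sum_range_succ, htdef]
      ring
    · show ofAdd (((5:ℕ) : ZMod 10)) * ofAdd 5 = ofAdd (0 : ZMod 10)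
      rw [← ofAdd_add]; decide
  have hwH : (inl (ofAdd t) : G) ∈ H := by rw [← hw]; exact mul_mem (pow_mem hzH 5) hxH
  -- all of inl is in H
  have hinl : ∀ u : ZMod p, (inl (ofAdd u) : G) ∈ H := by
    intro u
    have : (inl (ofAdd u) : G) = (inl (ofAdd t) : G) ^ (u * t⁻¹).val := by
      rw [← map_pow]
      congr 1
      rw [← ofAdd_nsmul]
      congr 1
      rw [nsmul_eq_mul, ZMod.natCast_val, ZMod.cast_id, mul_assoc,
        inv_mul_cancel₀ ht, mul_one]
    rw [this]
    exact pow_mem hwH _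
  -- inr (ofAdd 5) ∈ H
  have hr5 : (inr (ofAdd (5 : ZMod 10)) : G) ∈ H := by
    have hprod : (inl (ofAdd (-1 : ZMod p)) : G) * x = inr (ofAdd (5 : ZMod 10)) := by
      ext
      · show ofAdd (-1 : ZMod p) * (φ 1) (ofAdd 1) = ofAdd 0
        rw [map_one, MulAut.one_apply, ← ofAdd_add]
        norm_num
      · show (1 : Multiplicative (ZMod 10)) * ofAdd 5 = ofAdd 5
        rw [one_mul]
    rw [← hprod]
    exact mul_mem (hinl (-1)) hxH
  have hr1 : (inr (ofAdd (1 : ZMod 10)) : G) ∈ H := by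
    have : (inr (ofAdd (5 : ZMod 10)) : G) * y = inr (ofAdd (1 : ZMod 10)) := by
      rw [hydef, ← map_mul, ← ofAdd_add]
      norm_num
      decide
    rw [← this]
    exact mul_mem hr5 hyH
  have hinr : ∀ k : ZMod 10, (inr (ofAdd k) : G) ∈ H := by
    intro k
    have : (inr (ofAdd k) : G) = (inr (ofAdd (1 : ZMod 10)) : G) ^ k.val := by
      rw [← map_pow]
      congr 1
      rw [← ofAdd_nsmul]
      congr 1
      rw [nsmul_eq_mul, mul_one, ZMod.natCast_val, ZMod.cast_id]
    rw [this]
    exact pow_mem hr1 _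
  rw [eq_top_iff]
  intro g _
  rw [← inl_left_mul_inr_right g]
  exact mul_mem (hinl (toAdd g.left)) (hinr (toAdd g.right))
end
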